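/- arXiv:2007.07597 — 4 statements merged into one kernel-verified Lean document; each statement's English description precedes it below -/
import Mathlib

section
/- Let λ_1, …, λ_n be distinct points of the open unit disk and w_1, …, w_n complex numbers. There exists f in the Hardy space H² with f(λ_i) = w_i for all i and ‖f‖_{H²} ≤ C if and only if for all complex numbers α_1, …, α_n one has ∑_{i,j} conj(α_i) α_j (C² − conj(w_i) w_j (1 − conj(λ_i) λ_j)) / (1 − conj(λ_i) λ_j) ≥ 0. -/
open scoped ComplexConjugate ComplexOrder

private lemma aux_lt {a b : ℂ} (ha : ‖a‖ < 1) (hb : ‖b‖ < 1) :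
    ‖(starRingEnd ℂ) a * b‖ < 1 := by
  rw [norm_mul, RCLike.norm_conj]
  nlinarith [norm_nonneg a, norm_nonneg b]

private lemma aux_ne {a b : ℂ} (ha : ‖a‖ < 1) (hb : ‖b‖ < 1) :
    1 - (starRingEnd ℂ) a * b ≠ 0 := by
  intro h
  have h2 := aux_lt ha hb
  rw [sub_eq_zero] at h
  rw [← h] at h2
  simp at h2

open Finset in
private lemma aux_tsum_cs {u v : ℕ → ℝ} (hu0 : ∀ k, 0 ≤ u k) (hv0 : ∀ k, 0 ≤ v k)
    (hu : Summable fun k => u k ^ 2) (hv : Summable fun k => v k ^ 2) :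
    Summable (fun k => u k * v k) ∧
      ∑' k, u k * v k ≤ Real.sqrt (∑' k, u k ^ 2) * Real.sqrt (∑' k, v k ^ 2) := by
  have hsum : Summable fun k => u k * v k := by
    refine Summable.of_nonneg_of_le (fun k => mul_nonneg (hu0 k) (hv0 k)) (fun k => ?_)
      ((hu.add hv).div_const 2)
    nlinarith [sq_nonneg (u k - v k)]
  have hA : 0 ≤ ∑' k, u k ^ 2 := tsum_nonneg fun k => sq_nonneg _
  have hB : 0 ≤ ∑' k, v k ^ 2 := tsum_nonneg fun k => sq_nonneg _
  refine ⟨hsum, Summable.tsum_le_of_sum_le hsum fun s => ?_⟩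
  have h1 : (∑ k ∈ s, u k * v k) ^ 2 ≤ (∑ k ∈ s, u k ^ 2) * ∑ k ∈ s, v k ^ 2 :=
    sum_mul_sq_le_sq_mul_sq s u v
  have h2 : (∑ k ∈ s, u k ^ 2) ≤ ∑' k, u k ^ 2 := Summable.sum_le_tsum s (fun k _ => sq_nonneg _) hu
  have h3 : (∑ k ∈ s, v k ^ 2) ≤ ∑' k, v k ^ 2 := Summable.sum_le_tsum s (fun k _ => sq_nonneg _) hv
  have h4 : 0 ≤ ∑ k ∈ s, u k * v k := sum_nonneg fun k _ => mul_nonneg (hu0 k) (hv0 k)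
  calc ∑ k ∈ s, u k * v k = Real.sqrt ((∑ k ∈ s, u k * v k) ^ 2) := (Real.sqrt_sq h4).symm
    _ ≤ Real.sqrt ((∑' k, u k ^ 2) * ∑' k, v k ^ 2) := by
        apply Real.sqrt_le_sqrt
        exact h1.trans (mul_le_mul h2 h3 (sum_nonneg fun k _ => sq_nonneg _) hA)
    _ = Real.sqrt (∑' k, u k ^ 2) * Real.sqrt (∑' k, v k ^ 2) := Real.sqrt_mul hA _

private lemma aux_h {n : ℕ} {lam : Fin n → ℂ} (hlam : ∀ i, ‖lam i‖ < 1) (α : Fin n → ℂ) :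
    Summable (fun k : ℕ => ‖∑ i, α i * lam i ^ k‖ ^ 2) ∧
      ((∑' k : ℕ, ‖∑ i, α i * lam i ^ k‖ ^ 2 : ℝ) : ℂ) =
        ∑ i, ∑ j, conj (α i) * α j * (1 - conj (lam i) * lam j)⁻¹ := by
  have hnorm : ∀ i j, ‖conj (lam i) * lam j‖ < 1 := fun i j => aux_lt (hlam i) (hlam j)
  have hgs : ∀ i j : Fin n, Summable fun k : ℕ =>
      conj (α i) * α j * (conj (lam i) * lam j) ^ k :=
    fun i j => (summable_geometric_of_norm_lt_one (hnorm i j)).mul_left _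
  have hpt : ∀ k : ℕ, ((‖∑ i, α i * lam i ^ k‖ ^ 2 : ℝ) : ℂ) =
      ∑ i, ∑ j, conj (α i) * α j * (conj (lam i) * lam j) ^ k := by
    intro k
    have h1 : ((‖∑ i, α i * lam i ^ k‖ ^ 2 : ℝ) : ℂ) =
        conj (∑ i, α i * lam i ^ k) * (∑ i, α i * lam i ^ k) := by
      rw [RCLike.conj_mul]; norm_cast
    rw [h1, map_sum, Finset.sum_mul_sum]
    refine Finset.sum_congr rfl fun i _ => Finset.sum_congr rfl fun j _ => ?_
    simp only [map_mul, map_pow, mul_pow]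
    ring
  have hCs : Summable fun k : ℕ => ∑ i, ∑ j, conj (α i) * α j * (conj (lam i) * lam j) ^ k :=
    summable_sum fun i _ => summable_sum fun j _ => hgs i j
  have hsum : Summable (fun k : ℕ => ‖∑ i, α i * lam i ^ k‖ ^ 2) := by
    have := hCs.congr fun k => (hpt k).symm
    exact (RCLike.summable_ofReal ℂ).mp this
  refine ⟨hsum, ?_⟩
  calc ((∑' k : ℕ, ‖∑ i, α i * lam i ^ k‖ ^ 2 : ℝ) : ℂ)
      = ∑' k : ℕ, ((‖∑ i, α i * lam i ^ k‖ ^ 2 : ℝ) : ℂ) := RCLike.ofReal_tsum ℂ _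
    _ = ∑' k : ℕ, ∑ i, ∑ j, conj (α i) * α j * (conj (lam i) * lam j) ^ k := tsum_congr hpt
    _ = ∑ i, ∑' k : ℕ, ∑ j, conj (α i) * α j * (conj (lam i) * lam j) ^ k :=
        Summable.tsum_finsetSum fun i _ => summable_sum fun j _ => hgs i j
    _ = ∑ i, ∑ j, ∑' k : ℕ, conj (α i) * α j * (conj (lam i) * lam j) ^ k :=
        Finset.sum_congr rfl fun i _ => Summable.tsum_finsetSum fun j _ => hgs i j
    _ = ∑ i, ∑ j, conj (α i) * α j * (1 - conj (lam i) * lam j)⁻¹ := by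
        refine Finset.sum_congr rfl fun i _ => Finset.sum_congr rfl fun j _ => ?_
        rw [tsum_mul_left, tsum_geometric_of_norm_lt_one (hnorm i j)]

private lemma aux_A {n : ℕ} {lam : Fin n → ℂ} (hlam : ∀ i, ‖lam i‖ < 1)
    (w : Fin n → ℂ) (C : ℝ) (α : Fin n → ℂ) :
    ∑ i, ∑ j, conj (α i) * α j *
        ((C : ℂ) ^ 2 - conj (w i) * w j * (1 - conj (lam i) * lam j)) /
          (1 - conj (lam i) * lam j)
      = (C : ℂ) ^ 2 * (∑ i, ∑ j, conj (α i) * α j * (1 - conj (lam i) * lam j)⁻¹)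
        - conj (∑ i, α i * w i) * (∑ i, α i * w i) := by
  have step : ∀ i j : Fin n, conj (α i) * α j *
        ((C : ℂ) ^ 2 - conj (w i) * w j * (1 - conj (lam i) * lam j)) /
          (1 - conj (lam i) * lam j)
      = (C : ℂ) ^ 2 * (conj (α i) * α j * (1 - conj (lam i) * lam j)⁻¹)
        - conj (α i * w i) * (α j * w j) := by
    intro i j
    have hd := aux_ne (hlam i) (hlam j)
    field_simp
    simp only [map_mul]
    ring
  calc ∑ i, ∑ j, conj (α i) * α j *
        ((C : ℂ) ^ 2 - conj (w i) * w j * (1 - conj (lam i) * lam j)) /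
          (1 - conj (lam i) * lam j)
      = ∑ i, ∑ j, ((C : ℂ) ^ 2 * (conj (α i) * α j * (1 - conj (lam i) * lam j)⁻¹)
          - conj (α i * w i) * (α j * w j)) :=
        Finset.sum_congr rfl fun i _ => Finset.sum_congr rfl fun j _ => step i j
    _ = (C : ℂ) ^ 2 * (∑ i, ∑ j, conj (α i) * α j * (1 - conj (lam i) * lam j)⁻¹)
        - conj (∑ i, α i * w i) * (∑ i, α i * w i) := by
        rw [map_sum, Finset.sum_mul_sum]
        simp only [Finset.sum_sub_distrib, Finset.mul_sum]

/-- H² interpolation criterion. There exists `f ∈ H²` (given by its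
square-summable Taylor coefficients `a`) with `f(λ_i) = w_i` and `‖f‖_{H²} ≤ C` iff
the stated quadratic form is nonnegative (in the order of ℂ, i.e. it is real ≥ 0)
for all `α : Fin n → ℂ`. -/
theorem stmt8 (n : ℕ) (lam : Fin n → ℂ) (hlam : ∀ i, ‖lam i‖ < 1)
    (hdist : Function.Injective lam) (w : Fin n → ℂ) (C : ℝ) (hC : 0 < C) :
    (∃ a : ℕ → ℂ, Summable (fun k => ‖a k‖ ^ 2) ∧
        (∀ i, ∑' k : ℕ, a k * (lam i) ^ k = w i) ∧
        Real.sqrt (∑' k : ℕ, ‖a k‖ ^ 2) ≤ C)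
      ↔ ∀ α : Fin n → ℂ,
        0 ≤ ∑ i, ∑ j, conj (α i) * α j *
          ((C : ℂ) ^ 2 - conj (w i) * w j * (1 - conj (lam i) * lam j)) /
            (1 - conj (lam i) * lam j) := by
  constructor
  · rintro ⟨a, hsa, hint, hna⟩ α
    rw [aux_A hlam w C α, ← (aux_h hlam α).2]
    set S := ∑ i, α i * w i with hS
    set Q := ∑' k : ℕ, ‖∑ i, α i * lam i ^ k‖ ^ 2 with hQ
    have hQ0 : (0:ℝ) ≤ Q := tsum_nonneg fun _ => sq_nonneg _
    have hsum_i : ∀ i, Summable fun k : ℕ => a k * lam i ^ k := by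
      intro i
      apply Summable.of_norm
      have h2 : Summable fun k : ℕ => ‖lam i ^ k‖ ^ 2 := by
        have hgeo : Summable fun k : ℕ => (‖lam i‖ ^ 2) ^ k :=
          summable_geometric_of_lt_one (by positivity)
            (by nlinarith [hlam i, norm_nonneg (lam i)])
        refine hgeo.congr fun k => ?_
        rw [norm_pow, ← pow_mul, ← pow_mul, Nat.mul_comm]
      have h3 := (aux_tsum_cs (fun k => norm_nonneg (a k))
        (fun k => norm_nonneg (lam i ^ k)) hsa h2).1
      exact h3.congr fun k => (norm_mul _ _).symm
    have hSeq : S = ∑' k : ℕ, a k * (∑ i, α i * lam i ^ k) := by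
      calc S = ∑ i, α i * ∑' k : ℕ, a k * lam i ^ k :=
            Finset.sum_congr rfl fun i _ => by rw [hint i]
        _ = ∑ i, ∑' k : ℕ, α i * (a k * lam i ^ k) :=
            Finset.sum_congr rfl fun i _ => (tsum_mul_left).symm
        _ = ∑' k : ℕ, ∑ i, α i * (a k * lam i ^ k) :=
            (Summable.tsum_finsetSum fun i _ => (hsum_i i).mul_left _).symm
        _ = ∑' k : ℕ, a k * (∑ i, α i * lam i ^ k) := by
            refine tsum_congr fun k => ?_
            rw [Finset.mul_sum]
            exact Finset.sum_congr rfl fun i _ => by ring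
    have hQs := (aux_h hlam α).1
    obtain ⟨hsuv, hcs⟩ := aux_tsum_cs (fun k => norm_nonneg (a k))
      (fun k : ℕ => norm_nonneg (∑ i, α i * lam i ^ k)) hsa hQs
    have hnS : ‖S‖ ≤ C * Real.sqrt Q := by
      rw [hSeq]
      calc ‖∑' k : ℕ, a k * (∑ i, α i * lam i ^ k)‖
          ≤ ∑' k : ℕ, ‖a k‖ * ‖∑ i, α i * lam i ^ k‖ := by
            have := norm_tsum_le_tsum_norm
              (f := fun k : ℕ => a k * (∑ i, α i * lam i ^ k))
              (hsuv.congr fun k => (norm_mul _ _).symm)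
            calc ‖∑' k : ℕ, a k * (∑ i, α i * lam i ^ k)‖
                ≤ ∑' k : ℕ, ‖a k * (∑ i, α i * lam i ^ k)‖ := this
              _ = ∑' k : ℕ, ‖a k‖ * ‖∑ i, α i * lam i ^ k‖ :=
                  tsum_congr fun k => norm_mul _ _
        _ ≤ Real.sqrt (∑' k : ℕ, ‖a k‖ ^ 2) * Real.sqrt Q := hcs
        _ ≤ C * Real.sqrt Q := mul_le_mul_of_nonneg_right hna (Real.sqrt_nonneg _)
    have h1 : conj S * S = ((‖S‖ ^ 2 : ℝ) : ℂ) := by rw [RCLike.conj_mul]; norm_cast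
    rw [h1]
    have h2 : ((C:ℂ) ^ 2 * ((Q : ℝ) : ℂ) - ((‖S‖ ^ 2 : ℝ) : ℂ))
        = ((C ^ 2 * Q - ‖S‖ ^ 2 : ℝ) : ℂ) := by push_cast; ring
    rw [h2, Complex.zero_le_real]
    have h3 : ‖S‖ * ‖S‖ ≤ (C * Real.sqrt Q) * (C * Real.sqrt Q) :=
      mul_le_mul hnS hnS (norm_nonneg S) (mul_nonneg hC.le (Real.sqrt_nonneg Q))
    nlinarith [Real.sq_sqrt hQ0]
  · intro H
    set M : Matrix (Fin n) (Fin n) ℂ :=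
      Matrix.of (fun i j => (1 - conj (lam i) * lam j)⁻¹) with hM
    have hMapp : ∀ (x : Fin n → ℂ) i,
        M.mulVec x i = ∑ j, (1 - conj (lam i) * lam j)⁻¹ * x j := by
      intro x i
      simp [hM, Matrix.mulVec, dotProduct]
    have hker : ∀ x : Fin n → ℂ, M.mulVec x = 0 → x = 0 := by
      intro x hx
      have hQx : ((∑' k : ℕ, ‖∑ i, x i * lam i ^ k‖ ^ 2 : ℝ) : ℂ) = 0 := by
        rw [(aux_h hlam x).2]
        calc ∑ i, ∑ j, conj (x i) * x j * (1 - conj (lam i) * lam j)⁻¹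
            = ∑ i, conj (x i) * (M.mulVec x i) := by
              refine Finset.sum_congr rfl fun i _ => ?_
              rw [hMapp x i, Finset.mul_sum]
              exact Finset.sum_congr rfl fun j _ => by ring
          _ = 0 := by rw [hx]; simp
      have hQ0 : (∑' k : ℕ, ‖∑ i, x i * lam i ^ k‖ ^ 2 : ℝ) = 0 := by exact_mod_cast hQx
      have hzero : ∀ k : ℕ, ∑ i, x i * lam i ^ k = 0 := by
        have hh := (aux_h hlam x).1.hasSum
        rw [hQ0] at hh
        have := (hasSum_zero_iff_of_nonneg fun k => sq_nonneg _).1 hh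
        intro k
        have hk := congrFun this k
        simpa [pow_eq_zero_iff] using hk
      have hdet : ((Matrix.vandermonde lam).transpose).det ≠ 0 := by
        rw [Matrix.det_transpose]
        exact Matrix.det_vandermonde_ne_zero_iff.mpr hdist
      refine Matrix.eq_zero_of_mulVec_eq_zero hdet (funext fun j => ?_)
      calc (Matrix.vandermonde lam).transpose.mulVec x j
          = ∑ i, lam i ^ (j : ℕ) * x i := by
            simp [Matrix.mulVec, dotProduct, Matrix.vandermonde]
        _ = ∑ i, x i * lam i ^ (j : ℕ) := Finset.sum_congr rfl fun i _ => by ring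
        _ = 0 := hzero j
    have hinj : Function.Injective M.mulVec := by
      intro x y hxy
      have h0 : M.mulVec (x - y) = 0 := by
        rw [Matrix.mulVec_sub, hxy, sub_self]
      exact sub_eq_zero.mp (hker _ h0)
    have hunit : IsUnit M := Matrix.mulVec_injective_iff_isUnit.mp hinj
    obtain ⟨α, hα⟩ := Matrix.mulVec_surjective_iff_isUnit.mpr hunit (fun i => conj (w i))
    have hαi : ∀ i, M.mulVec α i = conj (w i) := fun i => congrFun hα i
    refine ⟨fun k => ∑ i, conj (α i) * conj (lam i) ^ k, ?_, ?_, ?_⟩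
    · refine ((aux_h hlam α).1).congr fun k => ?_
      show ‖∑ i, α i * lam i ^ k‖ ^ 2 = ‖∑ i, conj (α i) * conj (lam i) ^ k‖ ^ 2
      rw [show (∑ i, conj (α i) * conj (lam i) ^ k) = conj (∑ i, α i * lam i ^ k) by
        rw [map_sum]; exact Finset.sum_congr rfl fun i _ => by rw [map_mul, map_pow],
        RCLike.norm_conj]
    · intro i
      have hsumj : ∀ j : Fin n, Summable fun k : ℕ =>
          conj (α j) * (conj (lam j) * lam i) ^ k :=
        fun j => (summable_geometric_of_norm_lt_one (aux_lt (hlam j) (hlam i))).mul_left _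
      calc ∑' k : ℕ, (∑ j, conj (α j) * conj (lam j) ^ k) * lam i ^ k
          = ∑' k : ℕ, ∑ j, conj (α j) * (conj (lam j) * lam i) ^ k := by
            refine tsum_congr fun k => ?_
            rw [Finset.sum_mul]
            exact Finset.sum_congr rfl fun j _ => by rw [mul_pow]; ring
        _ = ∑ j, ∑' k : ℕ, conj (α j) * (conj (lam j) * lam i) ^ k :=
            Summable.tsum_finsetSum fun j _ => hsumj j
        _ = ∑ j, conj (α j) * (1 - conj (lam j) * lam i)⁻¹ := by
            refine Finset.sum_congr rfl fun j _ => ?_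
            rw [tsum_mul_left, tsum_geometric_of_norm_lt_one (aux_lt (hlam j) (hlam i))]
        _ = conj (M.mulVec α i) := by
            rw [hMapp α i, map_sum]
            refine Finset.sum_congr rfl fun j _ => ?_
            rw [map_mul, map_inv₀, map_sub, map_one, map_mul, Complex.conj_conj]
            ring
        _ = w i := by rw [hαi i, Complex.conj_conj]
    · have hnormeq : ∀ k : ℕ, ‖∑ i, conj (α i) * conj (lam i) ^ k‖ ^ 2
          = ‖∑ i, α i * lam i ^ k‖ ^ 2 := by
        intro k
        rw [show (∑ i, conj (α i) * conj (lam i) ^ k) = conj (∑ i, α i * lam i ^ k) by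
          rw [map_sum]; exact Finset.sum_congr rfl fun i _ => by rw [map_mul, map_pow],
          RCLike.norm_conj]
      set Q := ∑' k : ℕ, ‖∑ i, α i * lam i ^ k‖ ^ 2 with hQdef
      have hQrw : (∑' k : ℕ, ‖∑ i, conj (α i) * conj (lam i) ^ k‖ ^ 2) = Q :=
        tsum_congr hnormeq
      rw [hQrw]
      have hQ0 : (0:ℝ) ≤ Q := tsum_nonneg fun _ => sq_nonneg _
      set S := ∑ i, α i * w i with hS
      have hQC : ((Q : ℝ) : ℂ) = conj S := by
        rw [(aux_h hlam α).2]
        calc ∑ i, ∑ j, conj (α i) * α j * (1 - conj (lam i) * lam j)⁻¹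
            = ∑ i, conj (α i) * (M.mulVec α i) := by
              refine Finset.sum_congr rfl fun i _ => ?_
              rw [hMapp α i, Finset.mul_sum]
              exact Finset.sum_congr rfl fun j _ => by ring
          _ = ∑ i, conj (α i) * conj (w i) := by
              exact Finset.sum_congr rfl fun i _ => by rw [hαi i]
          _ = conj S := by rw [hS, map_sum]; exact Finset.sum_congr rfl fun i _ => (map_mul _ _ _).symm
      have hSQ : S = ((Q : ℝ) : ℂ) := by
        have := congrArg conj hQC
        rw [Complex.conj_conj, Complex.conj_ofReal] at this
        exact this.symm
      have hH := H α
      rw [aux_A hlam w C α, ← (aux_h hlam α).2, ← hQdef] at hH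
      rw [← hS] at hH
      rw [hSQ, Complex.conj_ofReal] at hH
      have hre : ((C ^ 2 * Q - Q * Q : ℝ) : ℂ) = (C:ℂ) ^ 2 * ((Q:ℝ):ℂ) - ((Q:ℝ):ℂ) * ((Q:ℝ):ℂ) := by
        push_cast; ring
      rw [← hre, Complex.zero_le_real] at hH
      have hQle : Q ≤ C ^ 2 := by nlinarith
      calc Real.sqrt Q ≤ Real.sqrt (C ^ 2) := Real.sqrt_le_sqrt hQle
        _ = C := Real.sqrt_sq hC.le
end

section
/- (Pick's theorem) Let λ_1, …, λ_n be distinct points in the open unit disk and w_1, …, w_n ∈ ℂ, C > 0. There exists f ∈ H^∞ (bounded holomorphic on the disk) with f(λ_i) = w_i for all i and sup_{z∈𝔻}|f(z)| ≤ C if and only if the matrix [(C² − conj(w_i) w_j)/(1 − conj(λ_i) λ_j)]_{i,j=1}^n is positive semidefinite. -/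
open scoped ComplexConjugate ComplexOrder

open Complex Metric

lemma mob_denom (a z : ℂ) (ha : ‖a‖ < 1) (hz : ‖z‖ ≤ 1) : 1 + conj a * z ≠ 0 := by
  intro h
  have h1 : ‖conj a * z‖ < 1 := by
    calc ‖conj a * z‖ ≤ ‖conj a‖ * ‖z‖ := norm_mul_le _ _
    _ ≤ ‖a‖ * 1 := by
        rw [RCLike.norm_conj]
        exact mul_le_mul_of_nonneg_left hz (norm_nonneg a)
    _ < 1 := by simpa using ha
  have : conj a * z = -1 := by linear_combination h
  rw [this] at h1; simp at h1


lemma normSq_le_one (z : ℂ) (h : ‖z‖ ≤ 1) : Complex.normSq z ≤ 1 := by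
  rw [Complex.normSq_eq_norm_sq]; nlinarith [norm_nonneg z]

lemma normSq_lt_one (z : ℂ) (h : ‖z‖ < 1) : Complex.normSq z < 1 := by
  rw [Complex.normSq_eq_norm_sq]; nlinarith [norm_nonneg z]

lemma mob_norm_le (a z : ℂ) (ha : ‖a‖ < 1) (hz : ‖z‖ ≤ 1) :
    ‖(z + a) / (1 + conj a * z)‖ ≤ 1 := by
  rw [norm_div, div_le_one (norm_pos_iff.mpr (mob_denom a z ha hz))]
  have key : normSq (z + a) ≤ normSq (1 + conj a * z) := by
    have h1 : normSq a < 1 := normSq_lt_one a ha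
    have h2 : normSq z ≤ 1 := normSq_le_one z hz
    simp only [normSq_apply, add_re, add_im, mul_re, mul_im, conj_re, conj_im,
      one_re, one_im] at *
    nlinarith [mul_nonneg (sub_nonneg.mpr h1.le) (sub_nonneg.mpr h2)]
  calc ‖z + a‖ = Real.sqrt (normSq (z + a)) := by
        rw [Complex.norm_def]
  _ ≤ Real.sqrt (normSq (1 + conj a * z)) := Real.sqrt_le_sqrt key
  _ = ‖1 + conj a * z‖ := by rw [Complex.norm_def]

lemma key_ineq (t r x : ℝ) (ht : 0 ≤ t) (htr : t < r) (hr : r < 1) (hx : x ≤ t*r) :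
    (1 - 2*x + t^2*r^2)*(r-t)^2 ≤ (r^2 + t^2 - 2*x)*(1-t*r)^2 := by
  have hdiff : 0 ≤ (1-t*r)^2 - (r-t)^2 := by
    have he : (1-t*r)^2 - (r-t)^2 = (1-t^2)*(1-r^2) := by ring
    rw [he]
    have h1 : 0 ≤ 1 - t^2 := by nlinarith
    have h2 : 0 ≤ 1 - r^2 := by nlinarith
    exact mul_nonneg h1 h2
  nlinarith [mul_nonneg hdiff (by linarith : (0:ℝ) ≤ 2*t*r - 2*x)]

lemma schwarz_div (a : ℂ) (ha : ‖a‖ < 1) (f : ℂ → ℂ)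
    (hd : DifferentiableOn ℂ f (ball 0 1))
    (hb : ∀ z ∈ ball (0:ℂ) 1, ‖f z‖ ≤ 1) (hfa : f a = 0) :
    ∃ g : ℂ → ℂ, DifferentiableOn ℂ g (ball 0 1) ∧
      (∀ z ∈ ball (0:ℂ) 1, ‖g z‖ ≤ 1) ∧
      ∀ z ∈ ball (0:ℂ) 1, f z = (z - a) / (1 - conj a * z) * g z := by
  have haball : a ∈ ball (0:ℂ) 1 := by simpa [mem_ball, dist_eq_norm] using ha
  set g : ℂ → ℂ := fun z => (1 - conj a * z) * dslope f a z with hgdef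
  have hgd : DifferentiableOn ℂ g (ball 0 1) := by
    refine DifferentiableOn.mul ?_ ?_
    · exact (differentiableOn_const 1).sub
        ((differentiableOn_const (conj a)).mul differentiableOn_id)
    · exact (differentiableOn_dslope (isOpen_ball.mem_nhds haball)).mpr hd
  have hfactor : ∀ z ∈ ball (0:ℂ) 1, f z = (z - a) / (1 - conj a * z) * g z := by
    intro z hz
    have hz1 : ‖z‖ ≤ 1 := by
      rw [mem_ball, dist_eq_norm, sub_zero] at hz; exact hz.le
    have hden : 1 - conj a * z ≠ 0 := by
      have := mob_denom (-a) z (by simpa using ha) hz1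
      simpa [sub_eq_add_neg] using this
    rcases eq_or_ne z a with rfl | hza
    · simp [hfa]
    · rw [hgdef]
      simp only
      rw [dslope_of_ne f hza, slope_def_field, hfa, sub_zero]
      have hza' : z - a ≠ 0 := sub_ne_zero.mpr hza
      have hden2 : 1 - z * conj a ≠ 0 := by rw [mul_comm]; exact hden
      field_simp
  refine ⟨g, hgd, ?_, hfactor⟩
  intro z hz
  have hz1 : ‖z‖ < 1 := by rw [mem_ball, dist_eq_norm, sub_zero] at hz; exact hz
  have main : ∀ r : ℝ, ‖z‖ < r → ‖a‖ < r → r < 1 → ‖g z‖ ≤ (1 - ‖a‖*r)/(r - ‖a‖) := by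
    intro r hzr har hr1
    have hr0 : 0 < r := lt_of_le_of_lt (norm_nonneg a) har
    have hsub : closedBall (0:ℂ) r ⊆ ball 0 1 := closedBall_subset_ball hr1
    have hdc : DiffContOnCl ℂ g (ball (0:ℂ) r) := by
      refine ⟨hgd.mono (ball_subset_ball hr1.le), ?_⟩
      refine (hgd.continuousOn).mono ?_
      rw [closure_ball (0:ℂ) hr0.ne']
      exact hsub
    have hfr : ∀ ζ ∈ frontier (ball (0:ℂ) r), ‖g ζ‖ ≤ (1 - ‖a‖*r)/(r - ‖a‖) := by
      intro ζ hζ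
      rw [frontier_ball (0:ℂ) hr0.ne'] at hζ
      have hζr : ‖ζ‖ = r := by
        rw [mem_sphere, dist_eq_norm, sub_zero] at hζ; exact hζ
      have hζa : ζ ≠ a := fun h => by rw [h] at hζr; exact har.ne hζr
      have hgζ : g ζ = (1 - conj a * ζ) * (f ζ / (ζ - a)) := by
        rw [hgdef]; simp only
        rw [dslope_of_ne f hζa, slope_def_field, hfa, sub_zero]
      set t := ‖a‖ with htdef
      have ht0 : 0 ≤ t := norm_nonneg a
      have hx : (conj a * ζ).re ≤ t * r := by
        calc (conj a * ζ).re ≤ ‖conj a * ζ‖ := re_le_norm _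
        _ = t * r := by rw [norm_mul, RCLike.norm_conj, hζr]
      have hta : normSq a = t^2 := by rw [normSq_eq_norm_sq]
      have hz2 : normSq ζ = r^2 := by rw [normSq_eq_norm_sq, hζr]
      have hnum : normSq (1 - conj a * ζ) = 1 - 2*(conj a * ζ).re + t^2*r^2 := by
        have h1 : normSq (1 - conj a * ζ)
            = normSq 1 + normSq (conj a * ζ) - 2 * ((1:ℂ) * conj (conj a * ζ)).re :=
          normSq_sub _ _
        rw [h1, normSq_one, normSq_mul, normSq_conj, one_mul, Complex.conj_re, hta, hz2]
        ring
      have hden : normSq (ζ - a) = r^2 + t^2 - 2*(conj a * ζ).re := by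
        have h1 : normSq (ζ - a) = normSq ζ + normSq a - 2 * (ζ * conj a).re := normSq_sub _ _
        rw [mul_comm ζ (conj a)] at h1
        rw [h1, hta, hz2]
      have hineq : ‖1 - conj a * ζ‖ * (r - t) ≤ (1 - t*r) * ‖ζ - a‖ := by
        have e1 : ‖1 - conj a * ζ‖^2 = normSq (1 - conj a * ζ) := by rw [Complex.sq_norm]
        have e2 : ‖ζ - a‖^2 = normSq (ζ - a) := by rw [Complex.sq_norm]
        have hk := key_ineq t r ((conj a * ζ).re) ht0 har hr1 hx
        rw [← hnum, ← e1, ← hden, ← e2] at hk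
        have h1 : 0 ≤ ‖1 - conj a * ζ‖ * (r - t) :=
          mul_nonneg (norm_nonneg _) (by linarith)
        have h2 : 0 ≤ (1 - t*r) * ‖ζ - a‖ :=
          mul_nonneg (by nlinarith) (norm_nonneg _)
        nlinarith
      have hζa' : (0:ℝ) < ‖ζ - a‖ := by
        rw [norm_pos_iff]; exact sub_ne_zero.mpr hζa
      have hfζ : ‖f ζ‖ ≤ 1 := by
        apply hb
        rw [mem_ball, dist_eq_norm, sub_zero, hζr]; exact hr1
      have hrt : (0:ℝ) < r - t := by linarith
      rw [hgζ, norm_mul, norm_div]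
      calc ‖1 - conj a * ζ‖ * (‖f ζ‖ / ‖ζ - a‖)
          ≤ ‖1 - conj a * ζ‖ * (1 / ‖ζ - a‖) := by gcongr
      _ = ‖1 - conj a * ζ‖ / ‖ζ - a‖ := by rw [mul_one_div]
      _ ≤ (1 - t*r)/(r - t) := by
          rw [div_le_div_iff₀ hζa' hrt]
          linarith [hineq]
    have hzc : z ∈ closure (ball (0:ℂ) r) := by
      rw [closure_ball (0:ℂ) hr0.ne']
      rw [mem_closedBall, dist_eq_norm, sub_zero]
      exact hzr.le
    exact Complex.norm_le_of_forall_mem_frontier_norm_le isBounded_ball hdc hfr hzc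
  -- limit as r → 1⁻
  have hlim : Filter.Tendsto (fun r : ℝ => (1 - ‖a‖*r)/(r - ‖a‖)) (nhdsWithin 1 (Set.Iio 1))
      (nhds 1) := by
    have hc : ContinuousAt (fun r : ℝ => (1 - ‖a‖*r)/(r - ‖a‖)) 1 := by
      apply ContinuousAt.div
      · fun_prop
      · fun_prop
      · simp only [ne_eq]
        intro h
        have : ‖a‖ = 1 := by linarith [sub_eq_zero.mp h]
        linarith
    have := hc.tendsto
    have heq : (1 - ‖a‖*1)/((1:ℝ) - ‖a‖) = 1 := by
      rw [mul_one]
      exact div_self (by intro h; have := sub_eq_zero.mp h; linarith)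
    rw [heq] at this
    exact this.mono_left nhdsWithin_le_nhds
  refine ge_of_tendsto hlim ?_
  have hmem : Set.Ioo (max ‖z‖ ‖a‖) 1 ∈ nhdsWithin (1:ℝ) (Set.Iio 1) := by
    apply Ioo_mem_nhdsLT_of_mem
    constructor
    · exact max_lt hz1 ha
    · exact le_refl 1
  filter_upwards [hmem] with r hr
  exact main r (lt_of_le_of_lt (le_max_left _ _) hr.1)
    (lt_of_le_of_lt (le_max_right _ _) hr.1) hr.2

set_option maxHeartbeats 1000000 in
lemma pick_identity (C a b c a' c' u v s u' v' s' : ℂ)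
    (h1 : 1 - a'*b ≠ 0) (h2 : 1 - c*a' ≠ 0) (h3 : 1 - c'*b ≠ 0) (h4 : 1 - c'*c ≠ 0)
    (h5 : C^2 - s'*s ≠ 0) (h6 : a' - c' ≠ 0) (h7 : b - c ≠ 0)
    (h8 : C^2 - s*u' ≠ 0) (h9 : C^2 - s'*v ≠ 0) (hC : C ≠ 0) :
    (C^2 - u'*v)/(1-a'*b) =
      ((C^2 - s*u')/(1-c*a')) * ((C^2-s'*v)/(1-c'*b)) / ((C^2-s'*s)/(1-c'*c))
      + ((C^2 - s*u')/(1-c*a')) * ((C^2-s'*v)/(1-c'*b)) * ((a'-c')*(b-c)) *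
        ((C^2 - (C^2*(1-c*a')*(u'-s'))/((a'-c')*(C^2-s*u')) *
            ((C^2*(1-c'*b)*(v-s))/((b-c)*(C^2-s'*v))))/(1-a'*b))
        / (C^2*(C^2-s'*s)) := by
  set A := C^2 - s*u' with hA
  set B := C^2 - s'*v with hB
  set p := 1 - c*a' with hp
  set q := 1 - c'*b with hq0
  set E := C^2 - s'*s with hE
  set r := 1 - c'*c with hr
  set m := (a'-c')*(b-c) with hm
  set d := 1 - a'*b with hd0
  have hG : (a'-c')*A * ((b-c)*B) ≠ 0 :=
    mul_ne_zero (mul_ne_zero h6 h8) (mul_ne_zero h7 h9)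
  set G := (a'-c')*A * ((b-c)*B) with hGdef
  set Q := C^2*G - C^2*p*(u'-s') * (C^2*q*(v-s)) with hQ
  have hq : (C^2 - (C^2*p*(u'-s'))/((a'-c')*A) * ((C^2*q*(v-s))/((b-c)*B))) = Q/G := by
    rw [div_mul_div_comm, eq_div_iff hG, sub_mul, div_mul_cancel₀ _ hG]
  rw [hq]
  have e1 : A/p * (B/q) / (E/r) = A*B*r/(p*q*E) := by
    rw [div_mul_div_comm, div_div_eq_mul_div, div_mul_eq_mul_div, div_div]
  have e2 : A/p * (B/q) * m * (Q/G/d) / (C^2*E) = A*B*m*Q/(p*q*(G*d)*(C^2*E)) := by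
    rw [div_mul_div_comm, div_mul_eq_mul_div, div_div, div_mul_div_comm, div_div]
  rw [e1, e2]
  have hpq : p*q*E ≠ 0 := mul_ne_zero (mul_ne_zero h2 h3) h5
  have hden2 : p*q*(G*d)*(C^2*E) ≠ 0 :=
    mul_ne_zero (mul_ne_zero (mul_ne_zero h2 h3) (mul_ne_zero hG h1))
      (mul_ne_zero (pow_ne_zero 2 hC) h5)
  rw [div_add_div _ _ hpq hden2, div_eq_div_iff h1 (mul_ne_zero hpq hden2)]
  simp only [hGdef, hQ, hA, hB, hp, hq0, hE, hr, hm, hd0]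
  ring

-- ne-zero helpers
lemma sub_ne_of_norm_lt {x y : ℂ} (h : ‖y‖ < ‖x‖) : x - y ≠ 0 := by
  intro hxy
  rw [sub_eq_zero] at hxy
  rw [hxy] at h
  exact lt_irrefl _ h

lemma one_sub_mul_ne {a b : ℂ} (ha : ‖a‖ < 1) (hb : ‖b‖ ≤ 1) : 1 - a * b ≠ 0 := by
  apply sub_ne_of_norm_lt
  rw [norm_one]
  calc ‖a * b‖ ≤ ‖a‖ * ‖b‖ := norm_mul_le _ _
  _ ≤ ‖a‖ * 1 := mul_le_mul_of_nonneg_left hb (norm_nonneg a)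
  _ < 1 := by simpa using ha

lemma csq_sub_mul_ne {x y : ℂ} {C : ℝ} (hC : 0 < C) (hx : ‖x‖ < C) (hy : ‖y‖ ≤ C) :
    (C:ℂ)^2 - x * y ≠ 0 := by
  apply sub_ne_of_norm_lt
  have h1 : ‖((C:ℂ))^2‖ = C^2 := by
    rw [norm_pow, Complex.norm_real, Real.norm_eq_abs, abs_of_pos hC]
  rw [h1]
  calc ‖x * y‖ ≤ ‖x‖ * ‖y‖ := norm_mul_le _ _
  _ ≤ ‖x‖ * C := mul_le_mul_of_nonneg_left hy (norm_nonneg x)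
  _ < C * C := mul_lt_mul_of_pos_right hx hC |>.trans_le (le_of_eq rfl)
  _ = C^2 := by ring

noncomputable def pickE (C : ℝ) (lN wN l w : ℂ) : ℂ :=
  ((C:ℂ)^2 - conj wN * w)/(1 - conj lN * l)

noncomputable def wred (C : ℝ) (lN wN l w : ℂ) : ℂ :=
  (C:ℂ)^2*(1 - conj lN * l)*(w - wN)/((l - lN)*((C:ℂ)^2 - conj wN * w))

lemma conj_pickE (C : ℝ) (lN wN l w : ℂ) :
    conj (pickE C lN wN l w) = ((C:ℂ)^2 - wN * conj w)/(1 - lN * conj l) := by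
  simp [pickE, map_div₀, map_sub, map_mul, map_pow, Complex.conj_conj, Complex.conj_ofReal]

lemma conj_wred (C : ℝ) (lN wN l w : ℂ) :
    conj (wred C lN wN l w) =
      (C:ℂ)^2*(1 - lN * conj l)*(conj w - conj wN)/((conj l - conj lN)*((C:ℂ)^2 - wN * conj w)) := by
  simp [wred, map_div₀, map_sub, map_mul, map_pow, Complex.conj_conj, Complex.conj_ofReal]

lemma pickE_self_real (C : ℝ) (lN wN : ℂ) :
    pickE C lN wN lN wN = (((C^2 - normSq wN)/(1 - normSq lN) : ℝ) : ℂ) := by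
  rw [pickE]
  rw [Complex.ofReal_div]
  congr 1
  · push_cast
    rw [normSq_eq_conj_mul_self]
  · push_cast
    rw [normSq_eq_conj_mul_self]

set_option maxHeartbeats 3200000 in
lemma pick_decomp (n : ℕ) (lam : Fin (n+1) → ℂ) (hlam : ∀ i, ‖lam i‖ < 1)
    (hdist : Function.Injective lam) (w : Fin (n+1) → ℂ) (C : ℝ) (hC : 0 < C)
    (hwN : ‖w (Fin.last n)‖ < C) (hw : ∀ i, ‖w i‖ ≤ C)
    (lam' w' : Fin n → ℂ)
    (hlam' : ∀ k, lam' k = lam k.castSucc)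
    (hw' : ∀ k, w' k = wred C (lam (Fin.last n)) (w (Fin.last n)) (lam k.castSucc) (w k.castSucc))
    (α : Fin (n+1) → ℂ) (β : Fin n → ℂ)
    (hβ : ∀ k, β k = α k.castSucc
        * pickE C (lam (Fin.last n)) (w (Fin.last n)) (lam k.castSucc) (w k.castSucc)
        * (lam k.castSucc - lam (Fin.last n))) :
    ∑ i, ∑ j, conj (α i) * α j * ((C:ℂ)^2 - conj (w i) * w j) / (1 - conj (lam i) * lam j)
    = conj (∑ j, α j * pickE C (lam (Fin.last n)) (w (Fin.last n)) (lam j) (w j))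
        * (∑ j, α j * pickE C (lam (Fin.last n)) (w (Fin.last n)) (lam j) (w j))
        / pickE C (lam (Fin.last n)) (w (Fin.last n)) (lam (Fin.last n)) (w (Fin.last n))
      + (1/((C:ℂ)^2*((C:ℂ)^2 - conj (w (Fin.last n)) * w (Fin.last n)))) *
        ∑ i, ∑ j, conj (β i) * β j * ((C:ℂ)^2 - conj (w' i) * w' j)
          / (1 - conj (lam' i) * lam' j) := by
  set N := Fin.last n with hN
  have hterm : ∀ i j : Fin n,
      conj (α i.castSucc) * α j.castSucc
          * ((C:ℂ)^2 - conj (w i.castSucc) * w j.castSucc)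
          / (1 - conj (lam i.castSucc) * lam j.castSucc)
      = conj (α i.castSucc * pickE C (lam N) (w N) (lam i.castSucc) (w i.castSucc))
          * (α j.castSucc * pickE C (lam N) (w N) (lam j.castSucc) (w j.castSucc))
          / pickE C (lam N) (w N) (lam N) (w N)
        + (1/((C:ℂ)^2*((C:ℂ)^2 - conj (w N) * w N))) *
          (conj (β i) * β j * ((C:ℂ)^2 - conj (w' i) * w' j)
            / (1 - conj (lam' i) * lam' j)) := by
    intro i j
    have hne : ∀ k : Fin n, lam k.castSucc ≠ lam N := by
      intro k h
      exact (Fin.castSucc_lt_last k).ne (hdist h)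
    have key := pick_identity C (lam i.castSucc) (lam j.castSucc) (lam N)
      (conj (lam i.castSucc)) (conj (lam N))
      (w i.castSucc) (w j.castSucc) (w N) (conj (w i.castSucc)) (conj (w j.castSucc))
      (conj (w N))
      (one_sub_mul_ne (by rw [RCLike.norm_conj]; exact hlam _) (hlam _).le)
      (one_sub_mul_ne (hlam N) (by rw [RCLike.norm_conj]; exact (hlam _).le))
      (one_sub_mul_ne (by rw [RCLike.norm_conj]; exact hlam N) (hlam _).le)
      (one_sub_mul_ne (by rw [RCLike.norm_conj]; exact hlam N) (hlam N).le)
      (csq_sub_mul_ne hC (by rw [RCLike.norm_conj]; exact hwN) (hw N))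
      (by
        rw [sub_ne_zero]
        intro h
        exact hne i (star_injective h))
      (sub_ne_zero.mpr (hne j))
      (csq_sub_mul_ne hC hwN (by rw [RCLike.norm_conj]; exact hw _))
      (csq_sub_mul_ne hC (by rw [RCLike.norm_conj]; exact hwN) (hw _))
      (by
        intro h
        rw [Complex.ofReal_eq_zero] at h
        exact hC.ne' h)
    rw [hβ i, hβ j, hw' i, hw' j, hlam' i, hlam' j]
    simp only [map_mul, conj_pickE, conj_wred, map_sub]
    simp only [pickE, wred, Complex.conj_conj, map_sub]
    linear_combination (conj (α i.castSucc) * α j.castSucc) * key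
  -- boundary terms
  have hTiN : ∀ i : Fin n,
      conj (α i.castSucc) * α N * ((C:ℂ)^2 - conj (w i.castSucc) * w N)
        / (1 - conj (lam i.castSucc) * lam N)
      = conj (α i.castSucc * pickE C (lam N) (w N) (lam i.castSucc) (w i.castSucc)) * α N := by
    intro i
    rw [map_mul, conj_pickE]
    ring
  have hTNj : ∀ j : Fin n,
      conj (α N) * α j.castSucc * ((C:ℂ)^2 - conj (w N) * w j.castSucc)
        / (1 - conj (lam N) * lam j.castSucc)
      = conj (α N) * (α j.castSucc * pickE C (lam N) (w N) (lam j.castSucc) (w j.castSucc)) := by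
    intro j
    rw [pickE]
    ring
  have hTNN : conj (α N) * α N * ((C:ℂ)^2 - conj (w N) * w N)
        / (1 - conj (lam N) * lam N)
      = conj (α N) * α N * pickE C (lam N) (w N) (lam N) (w N) := by
    rw [pickE]; ring
  have hPreal : conj (pickE C (lam N) (w N) (lam N) (w N)) = pickE C (lam N) (w N) (lam N) (w N) := by
    rw [pickE_self_real, Complex.conj_ofReal]
  have hP0 : pickE C (lam N) (w N) (lam N) (w N) ≠ 0 := by
    rw [pickE]
    apply div_ne_zero
    · exact csq_sub_mul_ne hC (by rw [RCLike.norm_conj]; exact hwN) (hw N)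
    · exact one_sub_mul_ne (by rw [RCLike.norm_conj]; exact hlam N) (hlam N).le
  -- split sums
  rw [Fin.sum_univ_castSucc
    (f := fun i => ∑ j, conj (α i) * α j * ((C:ℂ)^2 - conj (w i) * w j)
      / (1 - conj (lam i) * lam j))]
  simp only [Fin.sum_univ_castSucc
    (f := fun j => α j * pickE C (lam N) (w N) (lam j) (w j))]
  have hinner1 : ∀ i : Fin n,
      (∑ j, conj (α i.castSucc) * α j * ((C:ℂ)^2 - conj (w i.castSucc) * w j)
        / (1 - conj (lam i.castSucc) * lam j)) =
      (∑ j : Fin n,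
        (conj (α i.castSucc * pickE C (lam N) (w N) (lam i.castSucc) (w i.castSucc))
          * (α j.castSucc * pickE C (lam N) (w N) (lam j.castSucc) (w j.castSucc))
          / pickE C (lam N) (w N) (lam N) (w N)
        + (1/((C:ℂ)^2*((C:ℂ)^2 - conj (w N) * w N))) *
          (conj (β i) * β j * ((C:ℂ)^2 - conj (w' i) * w' j)
            / (1 - conj (lam' i) * lam' j))))
      + conj (α i.castSucc * pickE C (lam N) (w N) (lam i.castSucc) (w i.castSucc)) * α N := by
    intro i
    rw [Fin.sum_univ_castSucc (f := fun j => conj (α i.castSucc) * α j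
      * ((C:ℂ)^2 - conj (w i.castSucc) * w j) / (1 - conj (lam i.castSucc) * lam j))]
    rw [hTiN i]
    congr 1
    exact Finset.sum_congr rfl (fun j _ => hterm i j)
  have hinner2 :
      (∑ j, conj (α N) * α j * ((C:ℂ)^2 - conj (w N) * w j)
        / (1 - conj (lam N) * lam j)) =
      (∑ j : Fin n, conj (α N)
        * (α j.castSucc * pickE C (lam N) (w N) (lam j.castSucc) (w j.castSucc)))
      + conj (α N) * α N * pickE C (lam N) (w N) (lam N) (w N) := by
    rw [Fin.sum_univ_castSucc (f := fun j => conj (α N) * α j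
      * ((C:ℂ)^2 - conj (w N) * w j) / (1 - conj (lam N) * lam j))]
    rw [hTNN]
    congr 1
    exact Finset.sum_congr rfl (fun j _ => hTNj j)
  rw [Finset.sum_congr rfl (fun i _ => hinner1 i), hinner2]
  -- now pure sum algebra
  set P := pickE C (lam N) (w N) (lam N) (w N) with hPdef
  set D := (1/((C:ℂ)^2*((C:ℂ)^2 - conj (w N) * w N))) with hDdef
  set A : Fin n → ℂ := fun k => α k.castSucc * pickE C (lam N) (w N) (lam k.castSucc) (w k.castSucc) with hAdef
  set S1 := ∑ j : Fin n, A j with hS1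
  set SU := ∑ i : Fin n, ∑ j : Fin n, conj (β i) * β j * ((C:ℂ)^2 - conj (w' i) * w' j)
      / (1 - conj (lam' i) * lam' j) with hSU
  have hsum1 : (∑ i : Fin n,
      ((∑ j : Fin n, (conj (A i) * A j / P + D * (conj (β i) * β j
        * ((C:ℂ)^2 - conj (w' i) * w' j) / (1 - conj (lam' i) * lam' j))))
        + conj (A i) * α N))
      = conj S1 * S1 / P + D * SU + conj S1 * α N := by
    have h1 : ∀ i : Fin n, (∑ j : Fin n, (conj (A i) * A j / P
        + D * (conj (β i) * β j * ((C:ℂ)^2 - conj (w' i) * w' j)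
          / (1 - conj (lam' i) * lam' j))))
        = conj (A i) * S1 / P + D * (∑ j : Fin n, conj (β i) * β j
          * ((C:ℂ)^2 - conj (w' i) * w' j) / (1 - conj (lam' i) * lam' j)) := by
      intro i
      rw [Finset.sum_add_distrib]
      congr 1
      · rw [hS1, Finset.mul_sum, Finset.sum_div]
      · rw [Finset.mul_sum]
    rw [Finset.sum_congr rfl (fun i _ => by rw [h1 i])]
    rw [Finset.sum_add_distrib, Finset.sum_add_distrib]
    congr 1
    · congr 1
      · rw [hS1, map_sum, Finset.sum_mul, Finset.sum_div]
      · rw [hSU, Finset.mul_sum]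
    · rw [hS1, map_sum, Finset.sum_mul]
  rw [hsum1]
  have hmid : (∑ j : Fin n, conj (α N)
      * (α j.castSucc * pickE C (lam N) (w N) (lam j.castSucc) (w j.castSucc)))
      = conj (α N) * S1 := by
    rw [hS1, Finset.mul_sum]
  rw [hmid]
  have hconjS1 : conj (S1 + α N * P) = conj S1 + conj (α N) * P := by
    rw [map_add, map_mul, hPreal]
  rw [hconjS1]
  field_simp
  ring

lemma interp_back (C : ℝ) (hC : 0 < C) (li lN wi wN : ℂ)
    (h1 : 1 - conj lN * li ≠ 0) (h2 : li - lN ≠ 0) (h3 : (C:ℂ)^2 - conj wN * wi ≠ 0)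
    (h4 : (C:ℂ)^2 - conj wN * wN ≠ 0) :
    (C:ℂ) * (((li - lN)/(1 - conj lN * li) * (wred C lN wN li wi / C) + wN/C)
      / (1 + conj (wN/(C:ℂ)) * ((li - lN)/(1 - conj lN * li) * (wred C lN wN li wi / C))))
    = wi := by
  have hCc : (C:ℂ) ≠ 0 := by
    simpa [Complex.ofReal_eq_zero] using hC.ne'
  have hσ : conj (wN/(C:ℂ)) = conj wN/(C:ℂ) := by rw [map_div₀, Complex.conj_ofReal]
  rw [hσ, wred]
  have hU : (li - lN)/(1 - conj lN * li)
      * ((C:ℂ)^2*(1 - conj lN * li)*(wi - wN)/((li - lN)*((C:ℂ)^2 - conj wN * wi)) / C)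
      = (C:ℂ)*(wi - wN)/((C:ℂ)^2 - conj wN * wi) := by
    have h1' : 1 - li * conj lN ≠ 0 := by rw [mul_comm]; exact h1
    have h3' : (C:ℂ)^2 - wi * conj wN ≠ 0 := by rw [mul_comm]; exact h3
    field_simp
  rw [hU]
  have hden : 1 + conj wN/(C:ℂ) * ((C:ℂ)*(wi - wN)/((C:ℂ)^2 - conj wN * wi))
      = ((C:ℂ)^2 - conj wN * wN)/((C:ℂ)^2 - conj wN * wi) := by
    field_simp
    ring
  rw [hden]
  have h3' : (C:ℂ)^2 - wi * conj wN ≠ 0 := by rw [mul_comm]; exact h3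
  have h4' : (C:ℂ)^2 - wN * conj wN ≠ 0 := by rw [mul_comm]; exact h4
  field_simp
  ring

lemma interp_fwd (C : ℝ) (hC : 0 < C) (li lN wi wN : ℂ)
    (h1 : 1 - conj lN * li ≠ 0) (h2 : li - lN ≠ 0) (h3 : (C:ℂ)^2 - conj wN * wi ≠ 0) :
    (C:ℂ) * ((wi/C - wN/C)/(1 - conj (wN/(C:ℂ)) * (wi/C)) / ((li - lN)/(1 - conj lN * li)))
    = wred C lN wN li wi := by
  have hCc : (C:ℂ) ≠ 0 := by
    simpa [Complex.ofReal_eq_zero] using hC.ne'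
  have hσ : conj (wN/(C:ℂ)) = conj wN/(C:ℂ) := by rw [map_div₀, Complex.conj_ofReal]
  rw [hσ, wred]
  have hd : 1 - conj wN/(C:ℂ) * (wi/C) = ((C:ℂ)^2 - conj wN*wi)/((C:ℂ)^2) := by
    field_simp
  rw [hd]
  field_simp

lemma sum_two {n : ℕ} {i N : Fin n} (hiN : i ≠ N) (G : Fin n → ℂ)
    (h0 : ∀ k, k ≠ i → k ≠ N → G k = 0) : ∑ k, G k = G i + G N := by
  rw [← Finset.sum_subset (Finset.subset_univ {i, N})]
  · rw [Finset.sum_pair hiN]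
  · intro x _ hx
    simp only [Finset.mem_insert, Finset.mem_singleton, not_or] at hx
    exact h0 x hx.1 hx.2

lemma pick_diag {n : ℕ} (M : Fin n → Fin n → ℂ) (i : Fin n)
    (hQ : ∀ α : Fin n → ℂ, 0 ≤ ∑ k, ∑ l, conj (α k) * α l * M k l) : 0 ≤ M i i := by
  have := hQ (fun k => if k = i then 1 else 0)
  have hcol : ∀ k : Fin n, (∑ l, conj (if k = i then (1:ℂ) else 0) * (if l = i then (1:ℂ) else 0) * M k l)
      = (if k = i then (1:ℂ) else 0) * M k i := by
    intro k
    rw [Finset.sum_eq_single i]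
    · simp
    · intro l _ hl; simp [hl]
    · intro h; exact absurd (Finset.mem_univ i) h
  rw [Finset.sum_congr rfl (fun k _ => hcol k)] at this
  rw [Finset.sum_eq_single i] at this
  · simpa using this
  · intro l _ hl; simp [hl]
  · intro h; exact absurd (Finset.mem_univ i) h

lemma pick_offdiag {n : ℕ} (M : Fin n → Fin n → ℂ) (i N : Fin n) (hiN : i ≠ N)
    (hQ : ∀ α : Fin n → ℂ, 0 ≤ ∑ k, ∑ l, conj (α k) * α l * M k l)
    (hNN : M N N = 0) (hherm : conj (M i N) = M N i) : M i N = 0 := by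
  have hMii : 0 ≤ M i i := pick_diag M i hQ
  have hMiire : 0 ≤ (M i i).re := (Complex.le_def.mp hMii).1
  -- for each t > 0 evaluate the quadratic form
  have key : ∀ t : ℝ, 0 < t →
      0 ≤ t^2 * (M i i).re - 2*t*normSq (M i N) := by
    intro t ht
    set α : Fin n → ℂ := fun k => if k = i then (t:ℂ) else if k = N then -(conj (M i N)) else 0
      with hα
    have hαi : α i = (t:ℂ) := by simp [hα]
    have hαN : α N = -(conj (M i N)) := by simp [hα, hiN.symm]
    have hα0 : ∀ k, k ≠ i → k ≠ N → α k = 0 := by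
      intro k h1 h2; simp [hα, h1, h2]
    have h := hQ α
    have hrow : ∀ k : Fin n, (∑ l, conj (α k) * α l * M k l)
        = conj (α k) * α i * M k i + conj (α k) * α N * M k N := by
      intro k
      exact sum_two hiN _ (fun l hl1 hl2 => by rw [hα0 l hl1 hl2]; ring)
    rw [Finset.sum_congr rfl (fun k _ => hrow k)] at h
    rw [sum_two hiN _ (fun k h1 h2 => by rw [hα0 k h1 h2]; simp)] at h
    rw [hαi, hαN] at h
    set P := M i N with hP
    have hn : ((normSq P : ℝ):ℂ) = conj P * P := normSq_eq_conj_mul_self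
    have hE : conj ((t:ℂ)) * (t:ℂ) * M i i + conj ((t:ℂ)) * (-(conj P)) * M i N
        + (conj (-(conj P)) * (t:ℂ) * M N i + conj (-(conj P)) * (-(conj P)) * M N N)
        = ((t^2 : ℝ):ℂ) * M i i - (((2*t*normSq P) : ℝ):ℂ) := by
      rw [hNN, ← hherm]
      simp only [Complex.conj_ofReal, map_neg, Complex.conj_conj]
      rw [show (((2*t*normSq P):ℝ):ℂ) = 2*(t:ℂ)*((normSq P : ℝ):ℂ) by push_cast; ring]
      rw [hn]
      push_cast
      ring
    rw [hE] at h
    have hre := (Complex.le_def.mp h).1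
    have hre2 : (((t^2 : ℝ):ℂ) * M i i - (((2*t*normSq P) : ℝ):ℂ)).re
        = t^2 * (M i i).re - 2*t*normSq P := by
      simp [Complex.sub_re, Complex.mul_re, ← Complex.ofReal_pow]
    rw [hre2] at hre
    simp only [Complex.zero_re] at hre
    exact hre
  -- conclude
  have hns : normSq (M i N) ≤ 0 := by
    by_contra hpos
    push_neg at hpos
    have ht := key (normSq (M i N) / ((M i i).re + 1))
      (div_pos hpos (by linarith))
    have heq : ((normSq (M i N) / ((M i i).re + 1))^2*(M i i).re
        - 2*(normSq (M i N) / ((M i i).re + 1))*normSq (M i N)) * ((M i i).re+1)^2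
        = -(normSq (M i N)^2 * ((M i i).re + 2)) := by
      field_simp
      ring
    have h2 : 0 ≤ -(normSq (M i N)^2 * ((M i i).re + 2)) :=
      heq ▸ mul_nonneg ht (sq_nonneg _)
    nlinarith [mul_pos hpos hpos]
  have : normSq (M i N) = 0 := le_antisymm hns (normSq_nonneg _)
  exact normSq_eq_zero.mp this

lemma mob_norm_le' (a z : ℂ) (ha : ‖a‖ < 1) (hz : ‖z‖ ≤ 1) :
    ‖(z - a)/(1 - conj a * z)‖ ≤ 1 := by
  have := mob_norm_le (-a) z (by simpa using ha) hz
  simpa [sub_eq_add_neg, map_neg, neg_mul] using this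

lemma norm_le_of_sq_le {x : ℂ} {C : ℝ} (hC : 0 ≤ C) (h : normSq x ≤ C^2) : ‖x‖ ≤ C := by
  rw [Complex.normSq_eq_norm_sq] at h
  calc ‖x‖ = Real.sqrt (‖x‖^2) := (Real.sqrt_sq (norm_nonneg x)).symm
  _ ≤ Real.sqrt (C^2) := Real.sqrt_le_sqrt h
  _ = C := Real.sqrt_sq hC

set_option maxHeartbeats 1600000 in
theorem pick_aux (n : ℕ) : ∀ (lam : Fin n → ℂ), (∀ i, ‖lam i‖ < 1) →
    Function.Injective lam → ∀ (w : Fin n → ℂ) (C : ℝ), 0 < C →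
    ((∃ f : ℂ → ℂ, DifferentiableOn ℂ f (Metric.ball (0 : ℂ) 1) ∧
        (∀ z ∈ Metric.ball (0 : ℂ) 1, ‖f z‖ ≤ C) ∧
        (∀ i, f (lam i) = w i))
      ↔ ∀ α : Fin n → ℂ,
        0 ≤ ∑ i, ∑ j, conj (α i) * α j *
          ((C : ℂ) ^ 2 - conj (w i) * w j) / (1 - conj (lam i) * lam j)) := by
  induction n with
  | zero =>
    intro lam hlam hdist w C hC
    constructor
    · intro _ α
      simp
    · intro _
      exact ⟨fun _ => 0, differentiableOn_const 0, fun z _ => by simp [hC.le],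
        fun i => i.elim0⟩
  | succ n IH =>
    intro lam hlam hdist w C hC
    have hCc : (C:ℂ) ≠ 0 := by simpa [Complex.ofReal_eq_zero] using hC.ne'
    have hCnorm : ‖(C:ℂ)‖ = C := by rw [Complex.norm_real, Real.norm_eq_abs, abs_of_pos hC]
    set N := Fin.last n with hNdef
    have hball : ∀ i, lam i ∈ ball (0:ℂ) 1 := fun i => mem_ball_zero_iff.mpr (hlam i)
    have hne : ∀ k : Fin n, lam k.castSucc ≠ lam N := fun k h =>
      (Fin.castSucc_lt_last k).ne (hdist h)
    have hm0 : ∀ k : Fin n, lam k.castSucc - lam N ≠ 0 := fun k => sub_ne_zero.mpr (hne k)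
    have hlamden : ∀ i j : Fin (n+1), 1 - conj (lam i) * lam j ≠ 0 := fun i j =>
      one_sub_mul_ne (by rw [RCLike.norm_conj]; exact hlam i) (hlam j).le
    constructor
    · -- forward: interpolant implies PSD
      rintro ⟨f, hfd, hfb, hfi⟩
      have hw : ∀ i, ‖w i‖ ≤ C := fun i => by rw [← hfi i]; exact hfb _ (hball i)
      intro α
      by_cases hNC : ‖w N‖ = C
      · -- constant case
        have hmax : IsMaxOn (norm ∘ f) (ball (0:ℂ) 1) (lam N) := by
          rw [isMaxOn_iff]
          intro x hx
          simp only [Function.comp_apply]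
          rw [hfi N, hNC]
          exact hfb x hx
        have heq := Complex.eqOn_of_isPreconnected_of_isMaxOn_norm
          (convex_ball (0:ℂ) 1).isPreconnected isOpen_ball hfd (hball N) hmax
        have hwi : ∀ i, w i = w N := by
          intro i
          have h1 := heq (hball i)
          simp only [Function.const_apply] at h1
          rw [← hfi i, h1, hfi N]
        have hsq : conj (w N) * w N = (C:ℂ)^2 := by
          rw [show conj (w N) * w N = ((normSq (w N) : ℝ) : ℂ) from (normSq_eq_conj_mul_self).symm,
            show normSq (w N) = C^2 by rw [Complex.normSq_eq_norm_sq, hNC]]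
          push_cast
          ring
        have hterm0 : ∀ i j : Fin (n+1), conj (α i) * α j
            * ((C:ℂ)^2 - conj (w i) * w j) / (1 - conj (lam i) * lam j) = 0 := by
          intro i j
          rw [hwi i, hwi j, hsq, sub_self, mul_zero, zero_div]
        rw [Finset.sum_congr rfl (fun i _ => Finset.sum_congr rfl (fun j _ => hterm0 i j))]
        simp
      · -- non-constant: Schur reduction
        have hwN : ‖w N‖ < C := lt_of_le_of_ne (hw N) hNC
        have hσ : ‖w N/(C:ℂ)‖ < 1 := by rw [norm_div, hCnorm, div_lt_one hC]; exact hwN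
        have hfz1 : ∀ z ∈ ball (0:ℂ) 1, ‖f z / (C:ℂ)‖ ≤ 1 := by
          intro z hz
          rw [norm_div, hCnorm, div_le_one hC]
          exact hfb z hz
        set h : ℂ → ℂ := fun z => (f z/C - w N/C)/(1 - conj (w N/(C:ℂ)) * (f z/C)) with hhdef
        have hhd : DifferentiableOn ℂ h (ball 0 1) := by
          apply DifferentiableOn.div
          · exact (hfd.div_const _).sub (differentiableOn_const _)
          · exact (differentiableOn_const _).sub
              ((differentiableOn_const _).mul (hfd.div_const _))
          · intro z hz
            exact one_sub_mul_ne (by rw [RCLike.norm_conj]; exact hσ) (hfz1 z hz)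
        have hhb : ∀ z ∈ ball (0:ℂ) 1, ‖h z‖ ≤ 1 := fun z hz =>
          mob_norm_le' (w N/(C:ℂ)) (f z/C) hσ (hfz1 z hz)
        have hh0 : h (lam N) = 0 := by
          rw [hhdef]
          simp only
          rw [hfi N, sub_self, zero_div]
        obtain ⟨g₀, hg₀d, hg₀b, hfac⟩ := schwarz_div (lam N) (hlam N) h hhd hhb hh0
        -- reduced data interpolated by C * g₀
        have hgi : ∀ k : Fin n, (C:ℂ) * g₀ (lam k.castSucc)
            = wred C (lam N) (w N) (lam k.castSucc) (w k.castSucc) := by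
          intro k
          have hfk := hfac (lam k.castSucc) (hball _)
          have hbl0 : (lam k.castSucc - lam N)/(1 - conj (lam N) * lam k.castSucc) ≠ 0 :=
            div_ne_zero (hm0 k) (hlamden N k.castSucc)
          have hg0 : g₀ (lam k.castSucc) = h (lam k.castSucc)
              / ((lam k.castSucc - lam N)/(1 - conj (lam N) * lam k.castSucc)) := by
            rw [hfk, mul_div_cancel_left₀ _ hbl0]
          rw [hg0, hhdef]
          simp only
          rw [hfi k.castSucc]
          exact interp_fwd C hC (lam k.castSucc) (lam N) (w k.castSucc) (w N)
            (hlamden N k.castSucc) (hm0 k)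
            (csq_sub_mul_ne hC (by rw [RCLike.norm_conj]; exact hwN) (hw _))
        have hQred := (IH (fun k => lam k.castSucc) (fun k => hlam _)
          (fun a b hab => Fin.castSucc_injective n (hdist hab))
          (fun k => wred C (lam N) (w N) (lam k.castSucc) (w k.castSucc)) C hC).mp
          ⟨fun z => (C:ℂ) * g₀ z,
            (differentiableOn_const _).mul hg₀d,
            fun z hz => by
              rw [norm_mul, hCnorm]
              exact mul_le_of_le_one_right hC.le (hg₀b z hz),
            fun k => hgi k⟩
        have hdec := pick_decomp n lam hlam hdist w C hC hwN hw
          (fun k => lam k.castSucc)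
          (fun k => wred C (lam N) (w N) (lam k.castSucc) (w k.castSucc))
          (fun k => rfl) (fun k => rfl) α
          (fun k => α k.castSucc * pickE C (lam N) (w N) (lam k.castSucc) (w k.castSucc)
            * (lam k.castSucc - lam N))
          (fun k => rfl)
        rw [hdec]
        have hnsq : normSq (w N) < C^2 := by
          rw [Complex.normSq_eq_norm_sq]
          nlinarith [norm_nonneg (w N)]
        have hnsl : normSq (lam N) < 1 := normSq_lt_one _ (hlam N)
        apply add_nonneg
        · rw [show conj (∑ j, α j * pickE C (lam N) (w N) (lam j) (w j))
              * (∑ j, α j * pickE C (lam N) (w N) (lam j) (w j))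
              = ((normSq (∑ j, α j * pickE C (lam N) (w N) (lam j) (w j)) : ℝ) : ℂ)
            from (normSq_eq_conj_mul_self).symm]
          rw [pickE_self_real, ← Complex.ofReal_div]
          rw [Complex.zero_le_real]
          apply div_nonneg (normSq_nonneg _)
          apply le_of_lt
          apply div_pos (by linarith) (by linarith)
        · have hDcast : (1/((C:ℂ)^2*((C:ℂ)^2 - conj (w N) * w N)))
              = ((1/(C^2*(C^2 - normSq (w N))) : ℝ) : ℂ) := by
            rw [show conj (w N) * w N = ((normSq (w N) : ℝ) : ℂ)
              from (normSq_eq_conj_mul_self).symm]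
            push_cast
            ring
          rw [hDcast]
          apply mul_nonneg
          · rw [Complex.zero_le_real]
            apply le_of_lt
            apply div_pos one_pos
            have : 0 < C^2 := by positivity
            nlinarith
          · exact hQred _
    · -- backward: PSD implies interpolant
      intro hQ
      have hQM : ∀ α : Fin (n+1) → ℂ, 0 ≤ ∑ k, ∑ l, conj (α k) * α l
          * (((C:ℂ)^2 - conj (w k) * w l)/(1 - conj (lam k) * lam l)) := by
        intro α
        have h0 := hQ α
        rw [Finset.sum_congr rfl (fun k _ => Finset.sum_congr rfl
          (fun l _ => (mul_div_assoc (conj (α k) * α l)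
            ((C:ℂ)^2 - conj (w k) * w l) (1 - conj (lam k) * lam l))))] at h0
        exact h0
      have hw : ∀ i, ‖w i‖ ≤ C := by
        intro i
        have h0 := pick_diag (fun k l => ((C:ℂ)^2 - conj (w k) * w l)
          /(1 - conj (lam k) * lam l)) i hQM
        have hcast := pickE_self_real C (lam i) (w i)
        rw [pickE] at hcast
        rw [hcast, Complex.zero_le_real] at h0
        have hden : 0 < 1 - normSq (lam i) := by
          have := normSq_lt_one (lam i) (hlam i)
          linarith
        have hnum : 0 ≤ C^2 - normSq (w i) := by
          rcases div_nonneg_iff.mp h0 with ⟨h,_⟩|⟨_,h⟩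
          · exact h
          · linarith
        exact norm_le_of_sq_le hC.le (by linarith)
      by_cases hNC : ‖w N‖ = C
      · -- constant interpolant
        have hwN0 : w N ≠ 0 := by
          intro h0
          rw [h0, norm_zero] at hNC
          linarith
        have hsq : conj (w N) * w N = (C:ℂ)^2 := by
          rw [show conj (w N) * w N = ((normSq (w N) : ℝ) : ℂ)
              from (normSq_eq_conj_mul_self).symm,
            show normSq (w N) = C^2 by rw [Complex.normSq_eq_norm_sq, hNC]]
          push_cast
          ring
        have hNN : ((C:ℂ)^2 - conj (w N) * w N)/(1 - conj (lam N) * lam N) = 0 := by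
          rw [hsq, sub_self, zero_div]
        have hwi : ∀ i, w i = w N := by
          intro i
          rcases eq_or_ne i N with rfl | hiN
          · rfl
          · have hherm : conj (((C:ℂ)^2 - conj (w i) * w N)/(1 - conj (lam i) * lam N))
                = ((C:ℂ)^2 - conj (w N) * w i)/(1 - conj (lam N) * lam i) := by
              rw [map_div₀, map_sub, map_mul, map_pow, Complex.conj_conj, Complex.conj_ofReal,
                map_sub, map_mul, Complex.conj_conj, map_one]
              ring
            have hoff := pick_offdiag (fun k l => ((C:ℂ)^2 - conj (w k) * w l)
              /(1 - conj (lam k) * lam l)) i N hiN hQM hNN hherm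
            rw [div_eq_zero_iff] at hoff
            rcases hoff with h0 | h0
            · have h1 : conj (w i) * w N = (C:ℂ)^2 := by linear_combination -h0
              have h3 : (conj (w i) - conj (w N)) * w N = 0 := by
                linear_combination h1 - hsq
              rcases mul_eq_zero.mp h3 with h4 | h4
              · have h5 : conj (w i) = conj (w N) := by linear_combination h4
                have := congrArg conj h5
                simpa using this
              · exact absurd h4 hwN0
            · exact absurd h0 (hlamden i N)
        exact ⟨fun _ => w N, differentiableOn_const _,
          fun z _ => le_of_eq hNC, fun i => (hwi i).symm⟩
      · -- Schur step backward
        have hwN : ‖w N‖ < C := lt_of_le_of_ne (hw N) hNC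
        have hnsq : normSq (w N) < C^2 := by
          rw [Complex.normSq_eq_norm_sq]
          nlinarith [norm_nonneg (w N)]
        have hnsl : normSq (lam N) < 1 := normSq_lt_one _ (hlam N)
        have he0 : ∀ k : Fin n,
            pickE C (lam N) (w N) (lam k.castSucc) (w k.castSucc) ≠ 0 := by
          intro k
          rw [pickE]
          exact div_ne_zero
            (csq_sub_mul_ne hC (by rw [RCLike.norm_conj]; exact hwN) (hw _))
            (hlamden N k.castSucc)
        have hP0 : pickE C (lam N) (w N) (lam N) (w N) ≠ 0 := by
          rw [pickE]
          exact div_ne_zero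
            (csq_sub_mul_ne hC (by rw [RCLike.norm_conj]; exact hwN) (hw N))
            (hlamden N N)
        have hQred : ∀ γ : Fin n → ℂ, 0 ≤ ∑ i, ∑ j, conj (γ i) * γ j *
            ((C:ℂ)^2 - conj ((fun k => wred C (lam N) (w N) (lam k.castSucc) (w k.castSucc)) i)
              * (fun k => wred C (lam N) (w N) (lam k.castSucc) (w k.castSucc)) j)
            / (1 - conj ((fun k => lam k.castSucc) i) * (fun k => lam k.castSucc) j) := by
          intro γ
          set γ' : Fin n → ℂ := fun k => γ k
            / (pickE C (lam N) (w N) (lam k.castSucc) (w k.castSucc)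
              * (lam k.castSucc - lam N)) with hγ'
          set αN : ℂ := -(∑ k : Fin n, γ' k
            * pickE C (lam N) (w N) (lam k.castSucc) (w k.castSucc))
            / pickE C (lam N) (w N) (lam N) (w N) with hαNdef
          set α : Fin (n+1) → ℂ := Fin.lastCases αN γ' with hα
          have hαc : ∀ k : Fin n, α k.castSucc = γ' k := fun k => by
            rw [hα]; exact Fin.lastCases_castSucc ..
          have hαl : α N = αN := by rw [hα]; exact Fin.lastCases_last ..
          have hβ : ∀ k : Fin n, γ k = α k.castSucc
              * pickE C (lam N) (w N) (lam k.castSucc) (w k.castSucc)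
              * (lam k.castSucc - lam N) := by
            intro k
            rw [hαc k, hγ']
            simp only
            rw [div_mul_eq_mul_div, div_mul_eq_mul_div,
              eq_div_iff (mul_ne_zero (he0 k) (hm0 k))]
            ring
          have hdec := pick_decomp n lam hlam hdist w C hC hwN hw
            (fun k => lam k.castSucc)
            (fun k => wred C (lam N) (w N) (lam k.castSucc) (w k.castSucc))
            (fun k => rfl) (fun k => rfl) α γ hβ
          have hQα := hQ α
          rw [hdec] at hQα
          have hLzero : (∑ j, α j * pickE C (lam N) (w N) (lam j) (w j)) = 0 := by
            rw [Fin.sum_univ_castSucc (f := fun j => α j * pickE C (lam N) (w N) (lam j) (w j))]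
            simp only [hαc, hαl]
            rw [show α (Fin.last n) = αN from hαl]
            rw [hαNdef, div_mul_cancel₀ _ hP0]
            exact add_neg_cancel _
          rw [hLzero] at hQα
          simp only [map_zero, zero_mul, mul_zero, zero_div, zero_add] at hQα
          have hDcast : (1/((C:ℂ)^2*((C:ℂ)^2 - conj (w N) * w N)))
              = ((1/(C^2*(C^2 - normSq (w N))) : ℝ) : ℂ) := by
            rw [show conj (w N) * w N = ((normSq (w N) : ℝ) : ℂ)
              from (normSq_eq_conj_mul_self).symm]
            push_cast
            ring
          rw [hDcast] at hQα
          have hdpos : (0:ℝ) < 1/(C^2*(C^2 - normSq (w N))) := by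
            apply div_pos one_pos
            have : 0 < C^2 := by positivity
            nlinarith
          have hfin := mul_nonneg
            (Complex.zero_le_real.mpr (le_of_lt (inv_pos.mpr hdpos))) hQα
          rw [← mul_assoc, ← Complex.ofReal_mul, inv_mul_cancel₀ hdpos.ne',
            Complex.ofReal_one, one_mul] at hfin
          exact hfin
        obtain ⟨g, hgd, hgb, hgi⟩ := (IH (fun k => lam k.castSucc) (fun k => hlam _)
          (fun a b hab => Fin.castSucc_injective n (hdist hab))
          (fun k => wred C (lam N) (w N) (lam k.castSucc) (w k.castSucc)) C hC).mpr hQred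
        -- build the interpolant
        have hσ : ‖w N/(C:ℂ)‖ < 1 := by rw [norm_div, hCnorm, div_lt_one hC]; exact hwN
        set u : ℂ → ℂ := fun z => (z - lam N)/(1 - conj (lam N) * z) * (g z / C) with hu
        have hule : ∀ z ∈ ball (0:ℂ) 1, ‖u z‖ ≤ 1 := by
          intro z hz
          rw [hu]
          simp only
          rw [norm_mul]
          have h1 : ‖(z - lam N)/(1 - conj (lam N) * z)‖ ≤ 1 :=
            mob_norm_le' (lam N) z (hlam N) (mem_ball_zero_iff.mp hz).le
          have h2 : ‖g z / (C:ℂ)‖ ≤ 1 := by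
            rw [norm_div, hCnorm, div_le_one hC]; exact hgb z hz
          calc ‖(z - lam N)/(1 - conj (lam N) * z)‖ * ‖g z / (C:ℂ)‖
              ≤ 1 * 1 := mul_le_mul h1 h2 (norm_nonneg _) zero_le_one
          _ = 1 := one_mul 1
        have hden : ∀ z ∈ ball (0:ℂ) 1, 1 + conj (w N/(C:ℂ)) * u z ≠ 0 := fun z hz =>
          mob_denom _ _ hσ (hule z hz)
        have hud : DifferentiableOn ℂ u (ball 0 1) := by
          apply DifferentiableOn.mul
          · apply DifferentiableOn.div
            · exact differentiableOn_id.sub (differentiableOn_const _)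
            · exact (differentiableOn_const _).sub
                ((differentiableOn_const _).mul differentiableOn_id)
            · intro z hz
              exact one_sub_mul_ne (by rw [RCLike.norm_conj]; exact hlam N)
                (mem_ball_zero_iff.mp hz).le
          · exact hgd.div_const _
        refine ⟨fun z => (C:ℂ) * ((u z + w N/C)/(1 + conj (w N/(C:ℂ)) * u z)), ?_, ?_, ?_⟩
        · apply DifferentiableOn.mul (differentiableOn_const _)
          apply DifferentiableOn.div
          · exact hud.add (differentiableOn_const _)
          · exact (differentiableOn_const _).add ((differentiableOn_const _).mul hud)
          · exact hden
        · intro z hz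
          rw [norm_mul, hCnorm]
          exact mul_le_of_le_one_right hC.le (mob_norm_le (w N/(C:ℂ)) (u z) hσ (hule z hz))
        · intro i
          refine Fin.lastCases ?_ ?_ i
          · show (C:ℂ) * ((u (lam N) + w N/C)/(1 + conj (w N/(C:ℂ)) * u (lam N))) = w N
            have hu0 : u (lam N) = 0 := by
              rw [hu]
              simp [sub_self]
            rw [hu0, mul_zero, add_zero, zero_add, div_one, mul_comm,
              div_mul_cancel₀ _ hCc]
          · intro k
            have hgk : g (lam k.castSucc)
                = wred C (lam N) (w N) (lam k.castSucc) (w k.castSucc) := hgi k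
            have huk : u (lam k.castSucc) = (lam k.castSucc - lam N)
                /(1 - conj (lam N) * lam k.castSucc)
                * (wred C (lam N) (w N) (lam k.castSucc) (w k.castSucc) / C) := by
              rw [hu]
              simp only
              rw [hgk]
            show (C:ℂ) * ((u (lam k.castSucc) + w N/C)
              /(1 + conj (w N/(C:ℂ)) * u (lam k.castSucc))) = w k.castSucc
            rw [huk]
            exact interp_back C hC (lam k.castSucc) (lam N) (w k.castSucc) (w N)
              (hlamden N k.castSucc) (hm0 k)
              (csq_sub_mul_ne hC (by rw [RCLike.norm_conj]; exact hwN) (hw _))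
              (csq_sub_mul_ne hC (by rw [RCLike.norm_conj]; exact hwN) (hw N))


/-- Pick's theorem: for distinct `λ_i` in the open unit disk,
`w_i ∈ ℂ` and `C > 0`, there exists a bounded holomorphic `f` on the disk with
`f(λ_i) = w_i` and `sup_𝔻 |f| ≤ C` iff the Pick matrix
`[(C² - conj(w_i) w_j)/(1 - conj(λ_i) λ_j)]` is positive semidefinite. -/
theorem stmt9 (n : ℕ) (lam : Fin n → ℂ) (hlam : ∀ i, ‖lam i‖ < 1)
    (hdist : Function.Injective lam) (w : Fin n → ℂ) (C : ℝ) (hC : 0 < C) :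
    (∃ f : ℂ → ℂ, DifferentiableOn ℂ f (Metric.ball (0 : ℂ) 1) ∧
        (∀ z ∈ Metric.ball (0 : ℂ) 1, ‖f z‖ ≤ C) ∧
        (∀ i, f (lam i) = w i))
      ↔ ∀ α : Fin n → ℂ,
        0 ≤ ∑ i, ∑ j, conj (α i) * α j *
          ((C : ℂ) ^ 2 - conj (w i) * w j) / (1 - conj (lam i) * lam j) := by
  exact pick_aux n lam hlam hdist w C hC
end

section
/- (Lower bound in Pick's theorem) If f is a bounded holomorphic function on the unit disk with f(λ_i) = w_i for distinct λ_1,…,λ_n in the disk, then for all complex α_1,…,α_n: ∑_{i,j} conj(α_i) α_j conj(w_i) w_j / (1 − conj(λ_i) λ_j) ≤ ‖f‖²_∞ · ∑_{i,j} conj(α_i) α_j / (1 − conj(λ_i) λ_j). -/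
open MeasureTheory Real Set Metric intervalIntegral Filter
open scoped ComplexConjugate ComplexOrder Topology

lemma cs_int {u v : ℝ → ℝ} (hu : Continuous u) (hv : Continuous v)
    (hu0 : ∀ x, 0 ≤ u x) (hv0 : ∀ x, 0 ≤ v x) :
    ∫ θ in (0:ℝ)..2*π, u θ * v θ ≤
      Real.sqrt (∫ θ in (0:ℝ)..2*π, u θ ^ 2) * Real.sqrt (∫ θ in (0:ℝ)..2*π, v θ ^ 2) := by
  have h2π : (0:ℝ) ≤ 2 * π := by positivity
  set μ : Measure ℝ := volume.restrict (Set.Ioc (0:ℝ) (2*π)) with hμ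
  haveI : Fact (volume (Set.Ioc (0:ℝ) (2*π)) < ⊤) := ⟨measure_Ioc_lt_top⟩
  have hpq : Real.HolderConjugate 2 2 := by
    exact Real.HolderConjugate.two_two
  have bound : ∀ (w : ℝ → ℝ), Continuous w → MemLp w (ENNReal.ofReal 2) μ := by
    intro w hw
    obtain ⟨C, hC⟩ := (isCompact_Icc (a := (0:ℝ)) (b := 2*π)).exists_bound_of_continuousOn
      hw.continuousOn
    refine MemLp.of_bound hw.aestronglyMeasurable C ?_
    refine (ae_restrict_iff' measurableSet_Ioc).2 (Filter.Eventually.of_forall fun x hx => ?_)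
    exact hC x (Set.Ioc_subset_Icc_self hx)
  have h := integral_mul_norm_le_Lp_mul_Lq (μ := μ) hpq (bound u hu) (bound v hv)
  rw [intervalIntegral.integral_of_le h2π, intervalIntegral.integral_of_le h2π,
    intervalIntegral.integral_of_le h2π]
  have eu : ∀ x, ‖u x‖ = u x := fun x => Real.norm_of_nonneg (hu0 x)
  have ev : ∀ x, ‖v x‖ = v x := fun x => Real.norm_of_nonneg (hv0 x)
  simp only [eu, ev] at h
  have h1 : ∀ (w : ℝ → ℝ), (∀ x, 0 ≤ w x) → (∫ a, w a ^ (2:ℝ) ∂μ) ^ ((1:ℝ)/2)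
      = Real.sqrt (∫ a, w a ^ 2 ∂μ) := by
    intro w hw0
    rw [Real.sqrt_eq_rpow]
    congr 1
    refine integral_congr_ae (Filter.Eventually.of_forall fun x => ?_)
    rw [show (2:ℝ) = ((2:ℕ):ℝ) by norm_num]
    simp [Real.rpow_natCast]
  rw [h1 u hu0, h1 v hv0] at h
  exact h

lemma cauchy_pair {r : ℝ} (hr0 : 0 < r) (hr1 : r < 1) {u : ℂ → ℂ}
    (hu : DifferentiableOn ℂ u (Metric.ball 0 1)) {a : ℂ} (ha : ‖a‖ < 1) :
    ∫ θ in (0:ℝ)..2*π, u (circleMap 0 r θ) * conj ((1 - conj a * circleMap 0 r θ)⁻¹)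
      = 2 * π * u ((r:ℂ)^2 * a) := by
  have hmem : (r:ℂ)^2 * a ∈ Metric.ball (0:ℂ) r := by
    simp only [mem_ball, dist_zero_right, norm_mul, norm_pow, Complex.norm_real,
      Real.norm_eq_abs, abs_of_pos hr0]
    have h1 : r * ‖a‖ < 1 := by nlinarith [norm_nonneg a]
    nlinarith [norm_nonneg a]
  have hd : DiffContOnCl ℂ u (Metric.ball 0 r) := by
    refine ⟨hu.mono (Metric.ball_subset_ball hr1.le), ?_⟩
    refine hu.continuousOn.mono ?_
    rw [closure_ball (0:ℂ) hr0.ne']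
    exact Metric.closedBall_subset_ball hr1
  have key := hd.circleIntegral_sub_inv_smul hmem
  simp only [circleIntegral, deriv_circleMap, smul_eq_mul] at key
  have hz : ∀ θ : ℝ, u (circleMap 0 r θ) * conj ((1 - conj a * circleMap 0 r θ)⁻¹)
      = -Complex.I * ((circleMap 0 r θ * Complex.I) *
        ((circleMap 0 r θ - (r:ℂ)^2*a)⁻¹ * u (circleMap 0 r θ))) := by
    intro θ
    set z := circleMap 0 r θ with hzdef
    have hz0 : z ≠ 0 := circleMap_ne_center hr0.ne'
    have hzabs : ‖z‖ = r := by
      rw [hzdef, norm_circleMap_zero, abs_of_pos hr0]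
    have hzz : conj z * z = ((r:ℝ)^2 : ℂ) := by
      rw [mul_comm, Complex.mul_conj, Complex.normSq_eq_norm_sq, hzabs]
      norm_num
    have h2 : z - (r:ℂ)^2 * a ≠ 0 := by
      intro hzero
      have : ‖z‖ = ‖(r:ℂ)^2 * a‖ := by
        rw [sub_eq_zero] at hzero; rw [hzero]
      rw [hzabs, norm_mul, norm_pow, Complex.norm_real, Real.norm_eq_abs, abs_of_pos hr0] at this
      have : r = r^2 * ‖a‖ := this
      nlinarith [norm_nonneg a, ha]
    rw [map_inv₀, map_sub, map_one, map_mul, Complex.conj_conj]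
    have h3 : 1 - a * conj z = (z - (r:ℂ)^2 * a) / z := by
      field_simp
      linear_combination -a * hzz
    rw [h3, inv_div]
    have hI : Complex.I * Complex.I = -1 := Complex.I_mul_I
    field_simp
    ring_nf
    rw [Complex.I_sq]
    ring
  have : ∫ θ in (0:ℝ)..2*π, u (circleMap 0 r θ) * conj ((1 - conj a * circleMap 0 r θ)⁻¹)
      = -Complex.I * ∫ θ in (0:ℝ)..2*π, (circleMap 0 r θ * Complex.I) *
        ((circleMap 0 r θ - (r:ℂ)^2*a)⁻¹ * u (circleMap 0 r θ)) := by
    rw [← intervalIntegral.integral_const_mul]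
    exact intervalIntegral.integral_congr fun θ _ => hz θ
  rw [this, key]
  have hI : Complex.I * Complex.I = -1 := Complex.I_mul_I
  push_cast
  linear_combination (-2 * (π:ℂ) * u ((r:ℂ)^2*a)) * hI

lemma ker_ne {a z : ℂ} (ha : ‖a‖ < 1) (hz : ‖z‖ < 1) : 1 - conj a * z ≠ 0 := by
  intro h
  have h1 : conj a * z = 1 := by linear_combination -h
  have : ‖conj a * z‖ < 1 := by
    rw [norm_mul, RCLike.norm_conj]
    nlinarith [norm_nonneg a, norm_nonneg z]
  rw [h1, norm_one] at this
  exact lt_irrefl 1 this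

lemma ker_diff {a : ℂ} (ha : ‖a‖ < 1) :
    DifferentiableOn ℂ (fun z => (1 - conj a * z)⁻¹) (Metric.ball 0 1) := by
  refine DifferentiableOn.inv ?_ ?_
  · exact (differentiable_const (1:ℂ)).differentiableOn.sub
      ((differentiable_id.const_mul _).differentiableOn)
  · intro z hz
    exact ker_ne ha (by simpa [mem_ball, dist_zero_right] using hz)

lemma comp_circle_cont {u : ℂ → ℂ} (hu : DifferentiableOn ℂ u (Metric.ball 0 1))
    {r : ℝ} (hr0 : 0 < r) (hr1 : r < 1) :
    Continuous (fun θ : ℝ => u (circleMap 0 r θ)) := by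
  refine hu.continuousOn.comp_continuous (continuous_circleMap 0 r) fun θ => ?_
  simp only [mem_ball, dist_zero_right, norm_circleMap_zero]
  rw [abs_of_pos hr0]; exact hr1

lemma pair_sum {n : ℕ} {lam : Fin n → ℂ} (hlam : ∀ i, ‖lam i‖ < 1) (c : Fin n → ℂ)
    {u : ℂ → ℂ} (hu : DifferentiableOn ℂ u (Metric.ball 0 1)) {r : ℝ}
    (hr0 : 0 < r) (hr1 : r < 1)
    (hcauchy : ∀ (a : ℂ), ‖a‖ < 1 →
      ∫ θ in (0:ℝ)..2*π, u (circleMap 0 r θ) * conj ((1 - conj a * circleMap 0 r θ)⁻¹)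
        = 2 * π * u ((r:ℂ)^2 * a)) :
    ∫ θ in (0:ℝ)..2*π,
        u (circleMap 0 r θ) * conj (∑ j, c j * (1 - conj (lam j) * circleMap 0 r θ)⁻¹)
      = 2*π * ∑ j, conj (c j) * u ((r:ℂ)^2 * lam j) := by
  have hint : ∀ j : Fin n, IntervalIntegrable
      (fun θ => conj (c j) * (u (circleMap 0 r θ) *
        conj ((1 - conj (lam j) * circleMap 0 r θ)⁻¹))) volume 0 (2*π) := by
    intro j
    apply Continuous.intervalIntegrable
    apply Continuous.mul continuous_const
    apply Continuous.mul (comp_circle_cont hu hr0 hr1)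
    exact Complex.continuous_conj.comp (comp_circle_cont (ker_diff (hlam j)) hr0 hr1)
  calc ∫ θ in (0:ℝ)..2*π,
        u (circleMap 0 r θ) * conj (∑ j, c j * (1 - conj (lam j) * circleMap 0 r θ)⁻¹)
      = ∫ θ in (0:ℝ)..2*π, ∑ j, conj (c j) * (u (circleMap 0 r θ) *
          conj ((1 - conj (lam j) * circleMap 0 r θ)⁻¹)) := by
        refine intervalIntegral.integral_congr fun θ _ => ?_
        rw [map_sum, Finset.mul_sum]
        refine Finset.sum_congr rfl fun j _ => ?_
        rw [map_mul]; ring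
    _ = ∑ j, ∫ θ in (0:ℝ)..2*π, conj (c j) * (u (circleMap 0 r θ) *
          conj ((1 - conj (lam j) * circleMap 0 r θ)⁻¹)) :=
        intervalIntegral.integral_finset_sum (fun j _ => hint j)
    _ = ∑ j, conj (c j) * (2 * π * u ((r:ℂ)^2 * lam j)) := by
        refine Finset.sum_congr rfl fun j _ => ?_
        rw [intervalIntegral.integral_const_mul, hcauchy (lam j) (hlam j)]
    _ = 2*π * ∑ j, conj (c j) * u ((r:ℂ)^2 * lam j) := by
        rw [Finset.mul_sum]
        exact Finset.sum_congr rfl fun j _ => by push_cast; ring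

lemma fixedr {n : ℕ} {lam : Fin n → ℂ} (hlam : ∀ i, ‖lam i‖ < 1) {f : ℂ → ℂ}
    (hf : DifferentiableOn ℂ f (Metric.ball (0:ℂ) 1)) {M : ℝ}
    (hM : ∀ z ∈ Metric.ball (0:ℂ) 1, ‖f z‖ ≤ M) (α : Fin n → ℂ)
    {r : ℝ} (hr0 : 0 < r) (hr1 : r < 1) :
    ∑ i, ∑ j, conj (α i) * α j * conj (f ((r:ℂ)^2 * lam i)) * f ((r:ℂ)^2 * lam j)
        / (1 - (r:ℂ)^2 * (conj (lam i) * lam j))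
      ≤ ((M^2 : ℝ) : ℂ) *
        ∑ i, ∑ j, conj (α i) * α j / (1 - (r:ℂ)^2 * (conj (lam i) * lam j)) := by
  have h2π : (0:ℝ) ≤ 2 * π := by positivity
  have hM0 : 0 ≤ M := le_trans (norm_nonneg (f 0)) (hM 0 (by simp))
  set c : Fin n → ℂ := fun j => conj (α j) * conj (f ((r:ℂ)^2 * lam j)) with hc
  set g : ℂ → ℂ := fun z => ∑ j, c j * (1 - conj (lam j) * z)⁻¹ with hgdef
  set h : ℂ → ℂ := fun z => ∑ j, conj (α j) * (1 - conj (lam j) * z)⁻¹ with hhdef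
  have hg : DifferentiableOn ℂ g (Metric.ball 0 1) :=
    DifferentiableOn.fun_sum fun j _ => (ker_diff (hlam j)).const_mul _
  have hh : DifferentiableOn ℂ h (Metric.ball 0 1) :=
    DifferentiableOn.fun_sum fun j _ => (ker_diff (hlam j)).const_mul _
  have hfg : DifferentiableOn ℂ (fun z => f z * g z) (Metric.ball 0 1) := hf.mul hg
  -- continuity of compositions with circleMap
  have cg := comp_circle_cont hg hr0 hr1
  have chh := comp_circle_cont hh hr0 hr1
  have cfg := comp_circle_cont hfg hr0 hr1
  have cf := comp_circle_cont hf hr0 hr1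
  -- the three pairing identities
  have A := pair_sum hlam (fun j => conj (α j)) hfg hr0 hr1
    (fun a ha => cauchy_pair hr0 hr1 hfg ha)
  have B := pair_sum hlam c hg hr0 hr1 (fun a ha => cauchy_pair hr0 hr1 hg ha)
  have C := pair_sum hlam (fun j => conj (α j)) hh hr0 hr1
    (fun a ha => cauchy_pair hr0 hr1 hh ha)
  -- real integrals
  set Ig : ℝ := ∫ θ in (0:ℝ)..2*π, ‖g (circleMap 0 r θ)‖^2 with hIgdef
  set Ih : ℝ := ∫ θ in (0:ℝ)..2*π, ‖h (circleMap 0 r θ)‖^2 with hIhdef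
  set IF : ℝ := ∫ θ in (0:ℝ)..2*π, ‖f (circleMap 0 r θ) * g (circleMap 0 r θ)‖^2 with hIFdef
  have hIg0 : 0 ≤ Ig := intervalIntegral.integral_nonneg h2π (fun x _ => sq_nonneg _)
  have hIh0 : 0 ≤ Ih := intervalIntegral.integral_nonneg h2π (fun x _ => sq_nonneg _)
  -- identify ∫ v conj v with the real integral
  have self_pair : ∀ (v : ℂ → ℂ),
      (∫ θ in (0:ℝ)..2*π, v (circleMap 0 r θ) * conj (v (circleMap 0 r θ)))
        = ((∫ θ in (0:ℝ)..2*π, ‖v (circleMap 0 r θ)‖^2 : ℝ) : ℂ) := by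
    intro v
    rw [← intervalIntegral.integral_ofReal]
    refine intervalIntegral.integral_congr fun θ _ => ?_
    rw [Complex.mul_conj, Complex.normSq_eq_norm_sq]
  have hgeq : ∀ z : ℂ, (∑ j, c j * (1 - conj (lam j) * z)⁻¹) = g z := fun z => rfl
  have hheq : ∀ z : ℂ, (∑ j, conj (α j) * (1 - conj (lam j) * z)⁻¹) = h z := fun z => rfl
  simp only [hgeq, hheq] at A B C
  set T : ℂ := ∑ j, α j * (f ((r:ℂ)^2 * lam j) * g ((r:ℂ)^2 * lam j)) with hTdef
  set S : ℂ := ∑ j, α j * h ((r:ℂ)^2 * lam j) with hSdef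
  have hAT : (∫ θ in (0:ℝ)..2*π, (f (circleMap 0 r θ) * g (circleMap 0 r θ)) *
      conj (h (circleMap 0 r θ))) = 2*(π:ℂ) * T := by
    rw [A, hTdef]
    congr 1
    exact Finset.sum_congr rfl fun j _ => by rw [Complex.conj_conj]
  have hIgT : ((Ig : ℝ) : ℂ) = 2*(π:ℂ) * T := by
    rw [← self_pair g, B, hTdef]
    congr 1
    refine Finset.sum_congr rfl fun j _ => ?_
    simp only [hc, map_mul, Complex.conj_conj]
    ring
  have hIhS : ((Ih : ℝ) : ℂ) = 2*(π:ℂ) * S := by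
    rw [← self_pair h, C, hSdef]
    congr 1
    exact Finset.sum_congr rfl fun j _ => by rw [Complex.conj_conj]
  -- step 1 : Ig ≤ ∫ ‖fg‖ ‖h‖
  have step1 : Ig ≤ ∫ θ in (0:ℝ)..2*π,
      ‖f (circleMap 0 r θ) * g (circleMap 0 r θ)‖ * ‖h (circleMap 0 r θ)‖ := by
    have e1 : Ig = ‖((Ig : ℝ) : ℂ)‖ := by
      rw [Complex.norm_real, Real.norm_of_nonneg hIg0]
    rw [e1, hIgT, ← hAT]
    refine le_trans (intervalIntegral.norm_integral_le_integral_norm h2π) ?_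
    refine le_of_eq (intervalIntegral.integral_congr fun θ _ => ?_)
    rw [norm_mul, RCLike.norm_conj]
  -- step 2 : Cauchy-Schwarz
  have step2 : (∫ θ in (0:ℝ)..2*π,
      ‖f (circleMap 0 r θ) * g (circleMap 0 r θ)‖ * ‖h (circleMap 0 r θ)‖)
      ≤ Real.sqrt IF * Real.sqrt Ih :=
    cs_int cfg.norm chh.norm (fun _ => norm_nonneg _) (fun _ => norm_nonneg _)
  -- step 3 : IF ≤ M^2 * Ig
  have step3 : IF ≤ M^2 * Ig := by
    rw [hIFdef, hIgdef, ← intervalIntegral.integral_const_mul]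
    refine intervalIntegral.integral_mono_on h2π ((cfg.norm.pow 2).intervalIntegrable _ _)
      ((continuous_const.mul (cg.norm.pow 2)).intervalIntegrable _ _) fun θ _ => ?_
    have hball : circleMap 0 r θ ∈ Metric.ball (0:ℂ) 1 := by
      simp only [mem_ball, dist_zero_right, norm_circleMap_zero]
      rw [abs_of_pos hr0]; exact hr1
    have hfb := hM _ hball
    rw [norm_mul, mul_pow]
    have : ‖f (circleMap 0 r θ)‖^2 ≤ M^2 := by
      nlinarith [norm_nonneg (f (circleMap 0 r θ))]
    nlinarith [sq_nonneg ‖g (circleMap 0 r θ)‖]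
  -- combine into Ig ≤ M^2 * Ih
  have key : Ig ≤ M^2 * Ih := by
    have step4 : Real.sqrt IF ≤ M * Real.sqrt Ig := by
      refine le_trans (Real.sqrt_le_sqrt step3) ?_
      rw [Real.sqrt_mul (sq_nonneg M), Real.sqrt_sq hM0]
    have step5 : Ig ≤ M * Real.sqrt Ig * Real.sqrt Ih := by
      calc Ig ≤ Real.sqrt IF * Real.sqrt Ih := le_trans step1 step2
        _ ≤ M * Real.sqrt Ig * Real.sqrt Ih := by
            apply mul_le_mul_of_nonneg_right step4 (Real.sqrt_nonneg _)
    nlinarith [Real.sq_sqrt hIg0, Real.sq_sqrt hIh0, Real.sqrt_nonneg Ig,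
      Real.sqrt_nonneg Ih, hM0, sq_nonneg (M * Real.sqrt Ih - Real.sqrt Ig)]
  -- identify T and S with the target sums
  have hden : ∀ (i j : Fin n), (1 - conj (lam i) * ((r:ℂ)^2 * lam j))
      = 1 - (r:ℂ)^2 * (conj (lam i) * lam j) := fun i j => by ring
  have hT : T = ∑ i, ∑ j, conj (α i) * α j * conj (f ((r:ℂ)^2 * lam i)) * f ((r:ℂ)^2 * lam j)
      / (1 - (r:ℂ)^2 * (conj (lam i) * lam j)) := by
    rw [hTdef]
    simp only [hgdef, hc, Finset.mul_sum]
    rw [Finset.sum_comm]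
    refine Finset.sum_congr rfl fun i _ => Finset.sum_congr rfl fun j _ => ?_
    rw [hden i j, div_eq_mul_inv]
    ring
  have hS : S = ∑ i, ∑ j, conj (α i) * α j / (1 - (r:ℂ)^2 * (conj (lam i) * lam j)) := by
    rw [hSdef]
    simp only [hhdef, Finset.mul_sum]
    rw [Finset.sum_comm]
    refine Finset.sum_congr rfl fun i _ => Finset.sum_congr rfl fun j _ => ?_
    rw [hden i j, div_eq_mul_inv]
    ring
  rw [← hT, ← hS]
  have hπ : ((2*π:ℝ):ℂ) ≠ 0 := by
    simp only [ne_eq, Complex.ofReal_eq_zero]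
    positivity
  have hTval : T = (((Ig/(2*π)) : ℝ) : ℂ) := by
    rw [Complex.ofReal_div]
    rw [hIgT]
    push_cast
    field_simp
  have hSval : S = (((Ih/(2*π)) : ℝ) : ℂ) := by
    rw [Complex.ofReal_div]
    rw [hIhS]
    push_cast
    field_simp
  rw [hTval, hSval, ← Complex.ofReal_mul, Complex.real_le_real]
  have hπ0 : (0:ℝ) < 2*π := by positivity
  rw [← mul_div_assoc]
  gcongr

/-- lower bound in Pick's theorem: if `f` is bounded holomorphic on
the unit disk with `f(λ_i) = w_i` at distinct points of the disk, then for all `α`,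
`∑_{i,j} conj(α_i) α_j conj(w_i) w_j / (1 - conj(λ_i) λ_j)
  ≤ ‖f‖_∞² · ∑_{i,j} conj(α_i) α_j / (1 - conj(λ_i) λ_j)`
(an inequality between nonnegative reals, stated in the order of ℂ), where
`‖f‖_∞ = sup_{z ∈ 𝔻} ‖f z‖`. -/
theorem stmt10 (n : ℕ) (lam : Fin n → ℂ) (hlam : ∀ i, ‖lam i‖ < 1)
    (hdist : Function.Injective lam) (w : Fin n → ℂ)
    (f : ℂ → ℂ) (hf : DifferentiableOn ℂ f (Metric.ball (0 : ℂ) 1))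
    (hbd : BddAbove (Set.range fun z : Metric.ball (0 : ℂ) 1 => ‖f z‖))
    (hint : ∀ i, f (lam i) = w i) (α : Fin n → ℂ) :
    ∑ i, ∑ j, conj (α i) * α j * conj (w i) * w j / (1 - conj (lam i) * lam j)
      ≤ (((⨆ z : Metric.ball (0 : ℂ) 1, ‖f z‖) ^ 2 : ℝ) : ℂ) *
        ∑ i, ∑ j, conj (α i) * α j / (1 - conj (lam i) * lam j) := by
  set M : ℝ := ⨆ z : Metric.ball (0:ℂ) 1, ‖f z‖ with hMdef
  have hlamball : ∀ i, lam i ∈ Metric.ball (0:ℂ) 1 := fun i => by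
    simpa [Metric.mem_ball, dist_zero_right] using hlam i
  have hMb : ∀ z ∈ Metric.ball (0:ℂ) 1, ‖f z‖ ≤ M := fun z hz =>
    le_ciSup hbd (⟨z, hz⟩ : Metric.ball (0:ℂ) 1)
  set l : Filter ℝ := 𝓝[<] (1:ℝ) with hldef
  haveI : l.NeBot := nhdsLT_neBot 1
  set Qc : ℝ → ℂ := fun r =>
    ∑ i, ∑ j, conj (α i) * α j * conj (f ((r:ℂ)^2 * lam i)) * f ((r:ℂ)^2 * lam j)
      / (1 - (r:ℂ)^2 * (conj (lam i) * lam j)) with hQcdef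
  set Sc : ℝ → ℂ := fun r =>
    ∑ i, ∑ j, conj (α i) * α j / (1 - (r:ℂ)^2 * (conj (lam i) * lam j)) with hScdef
  have hev : ∀ᶠ r in l, Qc r ≤ ((M^2 : ℝ):ℂ) * Sc r := by
    filter_upwards [Ioo_mem_nhdsLT (show (0:ℝ) < 1 by norm_num)] with r hr
    exact fixedr hlam hf hMb α hr.1 hr.2
  have t0 : Tendsto (fun r : ℝ => ((r:ℂ))) l (𝓝 (1:ℂ)) := by
    have := (Complex.continuous_ofReal.tendsto 1).mono_left (nhdsWithin_le_nhds (s := Set.Iio 1))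
    simpa using this
  have htr : Tendsto (fun r : ℝ => ((r:ℂ)^2)) l (𝓝 (1:ℂ)) := by
    simpa using t0.pow 2
  have harg : ∀ i, Tendsto (fun r : ℝ => (r:ℂ)^2 * lam i) l (𝓝 (lam i)) := fun i => by
    simpa using htr.mul_const (lam i)
  have hfc : ∀ i, Tendsto (fun r : ℝ => f ((r:ℂ)^2 * lam i)) l (𝓝 (w i)) := fun i => by
    have hca : ContinuousAt f (lam i) :=
      (hf.differentiableAt (Metric.isOpen_ball.mem_nhds (hlamball i))).continuousAt
    have := hca.tendsto.comp (harg i)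
    rwa [hint i] at this
  have hdenne : ∀ i j : Fin n, (1 - conj (lam i) * lam j) ≠ 0 := fun i j =>
    ker_ne (hlam i) (hlam j)
  have hdent : ∀ i j : Fin n, Tendsto (fun r : ℝ => 1 - (r:ℂ)^2 * (conj (lam i) * lam j)) l
      (𝓝 (1 - conj (lam i) * lam j)) := fun i j => by
    have := htr.mul_const (conj (lam i) * lam j)
    simpa using (tendsto_const_nhds (x := (1:ℂ))).sub this
  have hQ : Tendsto Qc l (𝓝 (∑ i, ∑ j, conj (α i) * α j * conj (w i) * w j
      / (1 - conj (lam i) * lam j))) := by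
    refine tendsto_finset_sum _ fun i _ => tendsto_finset_sum _ fun j _ => ?_
    refine Tendsto.div ?_ (hdent i j) (hdenne i j)
    have hconj : Tendsto (fun r : ℝ => conj (f ((r:ℂ)^2 * lam i))) l (𝓝 (conj (w i))) :=
      (Complex.continuous_conj.tendsto _).comp (hfc i)
    exact ((tendsto_const_nhds (x := conj (α i) * α j)).mul hconj).mul (hfc j)
  have hSt : Tendsto Sc l (𝓝 (∑ i, ∑ j, conj (α i) * α j / (1 - conj (lam i) * lam j))) := by
    refine tendsto_finset_sum _ fun i _ => tendsto_finset_sum _ fun j _ => ?_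
    exact Tendsto.div tendsto_const_nhds (hdent i j) (hdenne i j)
  exact le_of_tendsto_of_tendsto hQ (tendsto_const_nhds.mul hSt) hev
end

section
/- Let λ_1, …, λ_n be distinct points in the open unit disk, w_1, …, w_n ∈ ℂ, and C > 0. There exists a function f in the Wiener algebra W (absolutely convergent Taylor series) with f(λ_i) = w_i for all i and ‖f‖_W ≤ C if and only if for every finite sequence of complex numbers α_1, …, α_n: sup_{j≥0} |∑_{i=1}^n α_i w_i λ_i^j| ≤ C · sup_{j≥0} |∑_{i=1}^n α_i λ_i^j|. -/
open scoped ENNReal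

noncomputable section Stmt11Aux

namespace Stmt11

/-- coordinate bound -/
lemma sum_pow_bound {n : ℕ} (lam : Fin n → ℂ) (hlam : ∀ i, ‖lam i‖ < 1)
    (β : Fin n → ℂ) (j : ℕ) : ‖∑ i, β i * lam i ^ j‖ ≤ ∑ i, ‖β i‖ := by
  refine (norm_sum_le _ _).trans (Finset.sum_le_sum fun i _ => ?_)
  rw [norm_mul, norm_pow]
  calc ‖β i‖ * ‖lam i‖ ^ j ≤ ‖β i‖ * 1 := by
        refine mul_le_mul_of_nonneg_left ?_ (norm_nonneg _)
        exact pow_le_one₀ (norm_nonneg _) (hlam i).le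
    _ = ‖β i‖ := mul_one _

lemma bdd {n : ℕ} (lam : Fin n → ℂ) (hlam : ∀ i, ‖lam i‖ < 1) (β : Fin n → ℂ) :
    BddAbove (Set.range fun j : ℕ => ‖∑ i, β i * lam i ^ j‖) := by
  refine ⟨∑ i, ‖β i‖, ?_⟩
  rintro x ⟨j, rfl⟩
  exact sum_pow_bound lam hlam β j

end Stmt11

namespace Stmt11

lemma forward {n : ℕ} (lam : Fin n → ℂ) (hlam : ∀ i, ‖lam i‖ < 1) (w : Fin n → ℂ)
    (C : ℝ) (a : ℕ → ℂ) (ha : Summable fun k => ‖a k‖)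
    (hint : ∀ i, ∑' k : ℕ, a k * lam i ^ k = w i) (hsum : ∑' k : ℕ, ‖a k‖ ≤ C)
    (α : Fin n → ℂ) :
    (⨆ j : ℕ, ‖∑ i, α i * w i * lam i ^ j‖) ≤ C * ⨆ j : ℕ, ‖∑ i, α i * lam i ^ j‖ := by
  set S : ℝ := ⨆ j : ℕ, ‖∑ i, α i * lam i ^ j‖ with hS
  have hS0 : 0 ≤ S := Real.iSup_nonneg fun j => norm_nonneg _
  have hSle : ∀ m : ℕ, ‖∑ i, α i * lam i ^ m‖ ≤ S := fun m => le_ciSup (bdd lam hlam α) m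
  refine ciSup_le fun j => ?_
  have hsumm : ∀ i : Fin n, Summable fun k : ℕ => a k * (α i * lam i ^ (k + j)) := by
    intro i
    refine Summable.of_norm_bounded (g := fun k => ‖α i‖ * ‖a k‖) (ha.mul_left _) fun k => ?_
    rw [norm_mul, norm_mul, norm_pow]
    calc ‖a k‖ * (‖α i‖ * ‖lam i‖ ^ (k + j)) ≤ ‖a k‖ * (‖α i‖ * 1) := by
          refine mul_le_mul_of_nonneg_left (mul_le_mul_of_nonneg_left ?_ (norm_nonneg _))
            (norm_nonneg _)
          exact pow_le_one₀ (norm_nonneg _) (hlam i).le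
      _ = ‖α i‖ * ‖a k‖ := by ring
  have key : ∑ i, α i * w i * lam i ^ j = ∑' k : ℕ, a k * ∑ i, α i * lam i ^ (k + j) := by
    have h1 : ∀ i : Fin n, α i * w i * lam i ^ j
        = ∑' k : ℕ, a k * (α i * lam i ^ (k + j)) := by
      intro i
      rw [← hint i]
      have : α i * (∑' k : ℕ, a k * lam i ^ k) * lam i ^ j
          = (∑' k : ℕ, a k * lam i ^ k) * (α i * lam i ^ j) := by ring
      rw [this, ← tsum_mul_right]
      exact tsum_congr fun k => by rw [pow_add]; ring
    calc ∑ i, α i * w i * lam i ^ j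
        = ∑ i, ∑' k : ℕ, a k * (α i * lam i ^ (k + j)) := Finset.sum_congr rfl fun i _ => h1 i
      _ = ∑' k : ℕ, ∑ i, a k * (α i * lam i ^ (k + j)) :=
          (Summable.tsum_finsetSum fun i _ => hsumm i).symm
      _ = ∑' k : ℕ, a k * ∑ i, α i * lam i ^ (k + j) :=
          tsum_congr fun k => (Finset.mul_sum _ _ _).symm
  rw [key]
  have hsumm2 : Summable fun k : ℕ => ‖a k * ∑ i, α i * lam i ^ (k + j)‖ := by
    refine Summable.of_nonneg_of_le (fun k => norm_nonneg _) (fun k => ?_) (ha.mul_right S)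
    rw [norm_mul]
    exact mul_le_mul_of_nonneg_left (hSle (k + j)) (norm_nonneg _)
  calc ‖∑' k : ℕ, a k * ∑ i, α i * lam i ^ (k + j)‖
      ≤ ∑' k : ℕ, ‖a k * ∑ i, α i * lam i ^ (k + j)‖ := norm_tsum_le_tsum_norm hsumm2
    _ ≤ ∑' k : ℕ, ‖a k‖ * S := by
        refine Summable.tsum_le_tsum (fun k => ?_) hsumm2 (ha.mul_right S)
        rw [norm_mul]
        exact mul_le_mul_of_nonneg_left (hSle (k + j)) (norm_nonneg _)
    _ = (∑' k : ℕ, ‖a k‖) * S := tsum_mul_right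
    _ ≤ C * S := mul_le_mul_of_nonneg_right hsum hS0

end Stmt11

namespace Stmt11

variable {n : ℕ}

def eVec (lam : Fin n → ℂ) (hlam : ∀ i, ‖lam i‖ < 1) (i : Fin n) :
    lp (fun _ : ℕ => ℂ) ∞ :=
  ⟨fun j => lam i ^ j, memℓp_infty ⟨1, by
    rintro x ⟨j, rfl⟩
    simpa [norm_pow] using pow_le_one₀ (norm_nonneg (lam i)) (hlam i).le⟩⟩

@[simp] lemma eVec_apply (lam : Fin n → ℂ) (hlam : ∀ i, ‖lam i‖ < 1) (i : Fin n) (j : ℕ) :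
    (eVec lam hlam i : ℕ → ℂ) j = lam i ^ j := rfl

/-- the synthesis map -/
def Tmap (lam : Fin n → ℂ) (hlam : ∀ i, ‖lam i‖ < 1) :
    (Fin n → ℂ) →ₗ[ℂ] lp (fun _ : ℕ => ℂ) ∞ :=
  ∑ i : Fin n, (LinearMap.proj i : (Fin n → ℂ) →ₗ[ℂ] ℂ).smulRight (eVec lam hlam i)

lemma Tmap_apply (lam : Fin n → ℂ) (hlam : ∀ i, ‖lam i‖ < 1) (α : Fin n → ℂ) (j : ℕ) :
    (Tmap lam hlam α : ℕ → ℂ) j = ∑ i, α i * lam i ^ j := by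
  simp only [Tmap, LinearMap.sum_apply, LinearMap.smulRight_apply, LinearMap.proj_apply]
  rw [lp.coeFn_sum]
  simp [lp.coeFn_smul, smul_eq_mul]

lemma norm_Tmap (lam : Fin n → ℂ) (hlam : ∀ i, ‖lam i‖ < 1) (α : Fin n → ℂ) :
    ‖Tmap lam hlam α‖ = ⨆ j : ℕ, ‖∑ i, α i * lam i ^ j‖ := by
  rw [lp.norm_eq_ciSup]
  exact congrArg _ (funext fun j => by rw [Tmap_apply])

/-- the target functional on coefficients -/
def gmap (w : Fin n → ℂ) : (Fin n → ℂ) →ₗ[ℂ] ℂ :=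
  ∑ i : Fin n, (LinearMap.proj i : (Fin n → ℂ) →ₗ[ℂ] ℂ).smulRight (w i)

lemma gmap_apply (w : Fin n → ℂ) (α : Fin n → ℂ) : gmap w α = ∑ i, α i * w i := by
  simp [gmap, smul_eq_mul]

end Stmt11

namespace Stmt11

lemma exists_mul_eq_norm (z : ℂ) : ∃ u : ℂ, ‖u‖ ≤ 1 ∧ u * z = (‖z‖ : ℂ) := by
  rcases eq_or_ne z 0 with h | h
  · exact ⟨1, by simp [h]⟩
  · have hz : (‖z‖ : ℂ) ≠ 0 := by
      simpa using norm_ne_zero_iff.mpr h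
    refine ⟨(starRingEnd ℂ) z / ‖z‖, ?_, ?_⟩
    · rw [norm_div]
      rw [div_le_one (by simpa using norm_pos_iff.mpr h)]
      simp
    · field_simp
      rw [mul_comm, Complex.mul_conj']

end Stmt11

namespace Stmt11

open Filter Topology

set_option maxHeartbeats 1000000 in
lemma backward {n : ℕ} (lam : Fin n → ℂ) (hlam : ∀ i, ‖lam i‖ < 1) (w : Fin n → ℂ)
    (C : ℝ) (hC : 0 < C)
    (hα : ∀ α : Fin n → ℂ, (⨆ j : ℕ, ‖∑ i, α i * w i * lam i ^ j‖) ≤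
      C * ⨆ j : ℕ, ‖∑ i, α i * lam i ^ j‖) :
    ∃ a : ℕ → ℂ, Summable (fun k => ‖a k‖) ∧
      (∀ i, ∑' k : ℕ, a k * lam i ^ k = w i) ∧ ∑' k : ℕ, ‖a k‖ ≤ C := by
  classical
  set T := Tmap lam hlam with hT
  -- the sup at j = 0 lower bound
  have h0le : ∀ α : Fin n → ℂ, ‖∑ i, α i * w i‖ ≤
      ⨆ j : ℕ, ‖∑ i, α i * w i * lam i ^ j‖ := by
    intro α
    have h := le_ciSup (bdd lam hlam fun i => α i * w i) 0
    simpa using h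
  -- kernel inclusion
  have hker : LinearMap.ker T ≤ LinearMap.ker (gmap w) := by
    intro α hαk
    rw [LinearMap.mem_ker] at hαk ⊢
    have hz : ∀ j : ℕ, ∑ i, α i * lam i ^ j = 0 := by
      intro j
      have h1 : (T α : ℕ → ℂ) j = 0 := by rw [hαk]; rfl
      rwa [hT, Tmap_apply] at h1
    have h2 : (⨆ j : ℕ, ‖∑ i, α i * w i * lam i ^ j‖) ≤ 0 := by
      have := hα α
      simpa [hz] using this
    have h3 : ‖∑ i, α i * w i‖ ≤ 0 := le_trans (h0le α) h2
    rw [gmap_apply]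
    exact norm_le_zero_iff.mp h3
  -- the functional on the range of T
  set φ₀ : ↥(LinearMap.range T) →ₗ[ℂ] ℂ :=
    (Submodule.liftQ (LinearMap.ker T) (gmap w) hker).comp
      (T.quotKerEquivRange.symm.toLinearMap) with hφ₀def
  have hφ₀ : ∀ (α : Fin n → ℂ) (hm : T α ∈ LinearMap.range T),
      φ₀ ⟨T α, hm⟩ = ∑ i, α i * w i := by
    intro α hm
    rw [hφ₀def]
    simp only [LinearMap.comp_apply, LinearEquiv.coe_toLinearMap]
    rw [T.quotKerEquivRange_symm_apply_image α hm]
    rw [Submodule.mkQ_apply, Submodule.liftQ_apply]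
    exact gmap_apply w α
  have hφ₀bound : ∀ x : ↥(LinearMap.range T), ‖φ₀ x‖ ≤ C * ‖x‖ := by
    rintro ⟨x, hx⟩
    obtain ⟨α, rfl⟩ := hx
    rw [hφ₀ α (LinearMap.mem_range_self T α)]
    calc ‖∑ i, α i * w i‖ ≤ ⨆ j : ℕ, ‖∑ i, α i * w i * lam i ^ j‖ := h0le α
      _ ≤ C * ⨆ j : ℕ, ‖∑ i, α i * lam i ^ j‖ := hα α
      _ = C * ‖T α‖ := by rw [hT, norm_Tmap]
      _ = C * ‖(⟨T α, LinearMap.mem_range_self T α⟩ : ↥(LinearMap.range T))‖ := by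
          rw [Submodule.coe_norm]
  set φ : ↥(LinearMap.range T) →L[ℂ] ℂ := LinearMap.mkContinuous φ₀ C hφ₀bound with hφdef
  obtain ⟨ψ, hψext, hψnorm⟩ := exists_extension_norm_eq (LinearMap.range T) φ
  have hψC : ‖ψ‖ ≤ C := by
    rw [hψnorm]
    exact LinearMap.mkContinuous_norm_le φ₀ hC.le hφ₀bound
  set a : ℕ → ℂ := fun k => ψ (lp.single ∞ k 1) with ha
  -- the coordinates of a finite combination of singles
  have hcoord : ∀ (s : Finset ℕ) (c : ℕ → ℂ) (j : ℕ),
      ((∑ k ∈ s, c k • lp.single ∞ k (1 : ℂ) : lp (fun _ : ℕ => ℂ) ∞) : ℕ → ℂ) j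
        = if j ∈ s then c j else 0 := by
    intro s c j
    rw [lp.coeFn_sum]
    simp only [Finset.sum_apply, lp.coeFn_smul, Pi.smul_apply, smul_eq_mul]
    have h1 : ∀ k ∈ s, c k * (lp.single ∞ k (1 : ℂ) : ℕ → ℂ) j
        = if j = k then c k else 0 := by
      intro k _
      by_cases h : j = k
      · subst h; rw [lp.single_apply_self, if_pos rfl, mul_one]
      · rw [lp.single_apply_ne _ _ _ h, if_neg h, mul_zero]
    rw [Finset.sum_congr rfl h1, Finset.sum_ite_eq s j c]
  -- partial sums bound
  have hpartial : ∀ s : Finset ℕ, ∑ k ∈ s, ‖a k‖ ≤ C := by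
    intro s
    choose u hu1 hu2 using fun k => exists_mul_eq_norm (a k)
    set x : lp (fun _ : ℕ => ℂ) ∞ := ∑ k ∈ s, u k • lp.single ∞ k (1 : ℂ) with hx
    have hxnorm : ‖x‖ ≤ 1 := by
      refine lp.norm_le_of_forall_le zero_le_one fun j => ?_
      rw [hx, hcoord s u j]
      split_ifs with h
      · exact hu1 j
      · simp
    have hψx : ψ x = ((∑ k ∈ s, ‖a k‖ : ℝ) : ℂ) := by
      rw [hx, map_sum]
      push_cast
      refine Finset.sum_congr rfl fun k _ => ?_
      rw [map_smul, smul_eq_mul, hu2 k]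
    have hnn : (0:ℝ) ≤ ∑ k ∈ s, ‖a k‖ := Finset.sum_nonneg fun k _ => norm_nonneg _
    calc ∑ k ∈ s, ‖a k‖ = ‖ψ x‖ := by
          rw [hψx, Complex.norm_real, Real.norm_eq_abs, abs_of_nonneg hnn]
      _ ≤ ‖ψ‖ * ‖x‖ := ψ.le_opNorm x
      _ ≤ C * 1 := mul_le_mul hψC hxnorm (norm_nonneg x) hC.le
      _ = C := mul_one C
  have hsummable : Summable fun k => ‖a k‖ :=
    summable_of_sum_le (fun k => norm_nonneg _) hpartial
  refine ⟨a, hsummable, ?_, hsummable.tsum_le_of_sum_le hpartial⟩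
  intro i
  -- ψ of the reproducing vector
  have hTe : T (Pi.single i 1) = eVec lam hlam i := by
    refine lp.ext (funext fun j => ?_)
    rw [hT, Tmap_apply, eVec_apply]
    simp [Pi.single_apply, ite_mul]
  have hmem : eVec lam hlam i ∈ LinearMap.range T := ⟨Pi.single i 1, hTe⟩
  have hEi : ψ (eVec lam hlam i) = w i := by
    have h1 := hψext ⟨eVec lam hlam i, hmem⟩
    have h2 : φ (⟨eVec lam hlam i, hmem⟩ : ↥(LinearMap.range T)) = w i := by
      rw [hφdef]
      rw [LinearMap.mkContinuous_apply]
      have h3 : (⟨eVec lam hlam i, hmem⟩ : ↥(LinearMap.range T))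
          = ⟨T (Pi.single i 1), LinearMap.mem_range_self T _⟩ := by
        exact Subtype.ext hTe.symm
      rw [h3, hφ₀]
      simp [Pi.single_apply, ite_mul]
    rw [← h2]
    exact h1
  -- truncations converge
  set sN : ℕ → lp (fun _ : ℕ => ℂ) ∞ :=
    fun N => ∑ k ∈ Finset.range N, lam i ^ k • lp.single ∞ k (1 : ℂ) with hsN
  have hψsN : ∀ N, ψ (sN N) = ∑ k ∈ Finset.range N, a k * lam i ^ k := by
    intro N
    rw [hsN, map_sum]
    refine Finset.sum_congr rfl fun k _ => ?_
    rw [map_smul, smul_eq_mul, mul_comm]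
  have hdiff : ∀ N, ‖eVec lam hlam i - sN N‖ ≤ ‖lam i‖ ^ N := by
    intro N
    refine lp.norm_le_of_forall_le (pow_nonneg (norm_nonneg _) N) fun j => ?_
    rw [lp.coeFn_sub, Pi.sub_apply, eVec_apply, hsN, hcoord]
    by_cases h : j ∈ Finset.range N
    · simp only [if_pos h, sub_self, norm_zero]
      exact pow_nonneg (norm_nonneg _) N
    · rw [if_neg h, sub_zero, norm_pow]
      exact pow_le_pow_of_le_one (norm_nonneg _) (hlam i).le
        (le_of_not_gt (by simpa [Finset.mem_range] using h))
  have hconv : Tendsto sN atTop (𝓝 (eVec lam hlam i)) := by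
    rw [tendsto_iff_norm_sub_tendsto_zero]
    refine squeeze_zero (fun N => norm_nonneg _) (fun N => ?_)
      (tendsto_pow_atTop_nhds_zero_of_lt_one (norm_nonneg _) (hlam i))
    rw [norm_sub_rev]
    exact hdiff N
  have hlim : Tendsto (fun N => ∑ k ∈ Finset.range N, a k * lam i ^ k)
      atTop (𝓝 (w i)) := by
    have h1 : Tendsto (fun N => ψ (sN N)) atTop (𝓝 (ψ (eVec lam hlam i))) :=
      (ψ.continuous.tendsto _).comp hconv
    rw [hEi] at h1
    exact h1.congr fun N => hψsN N
  have hsum2 : Summable fun k : ℕ => a k * lam i ^ k := by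
    refine Summable.of_norm_bounded (g := fun k => ‖a k‖) hsummable fun k => ?_
    rw [norm_mul, norm_pow]
    calc ‖a k‖ * ‖lam i‖ ^ k ≤ ‖a k‖ * 1 :=
          mul_le_mul_of_nonneg_left (pow_le_one₀ (norm_nonneg _) (hlam i).le) (norm_nonneg _)
      _ = ‖a k‖ := mul_one _
  exact tendsto_nhds_unique hsum2.hasSum.tendsto_sum_nat hlim

end Stmt11

end Stmt11Aux

/-- Wiener-algebra interpolation. For distinct `λ_i` in the open unit
disk, `w_i ∈ ℂ` and `C > 0`, there exists `f ∈ W` (given by its absolutely summable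
Taylor coefficients `a`) with `f(λ_i) = w_i` and `‖f‖_W = ∑_j |a j| ≤ C` iff for
every `α : Fin n → ℂ`,
`sup_{j≥0} |∑_i α_i w_i λ_i^j| ≤ C · sup_{j≥0} |∑_i α_i λ_i^j|`. -/
theorem stmt11 (n : ℕ) (lam : Fin n → ℂ) (hlam : ∀ i, ‖lam i‖ < 1)
    (hdist : Function.Injective lam) (w : Fin n → ℂ) (C : ℝ) (hC : 0 < C) :
    (∃ a : ℕ → ℂ, Summable (fun k => ‖a k‖) ∧
        (∀ i, ∑' k : ℕ, a k * (lam i) ^ k = w i) ∧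
        ∑' k : ℕ, ‖a k‖ ≤ C)
      ↔ ∀ α : Fin n → ℂ,
        (⨆ j : ℕ, ‖∑ i, α i * w i * (lam i) ^ j‖) ≤
          C * ⨆ j : ℕ, ‖∑ i, α i * (lam i) ^ j‖ := by
  constructor
  · rintro ⟨a, ha, hint, hsum⟩ α
    exact Stmt11.forward lam hlam w C a ha hint hsum α
  · intro h
    exact Stmt11.backward lam hlam w C hC h
end
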